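/- arXiv:1903.07325 — 5 statements merged into one kernel-verified Lean document; each statement's English description precedes it below -/
import Mathlib

section
/- For every n ≥ 5 the completely positive cone CPPⁿ is a proper subset of the doubly nonnegative cone DNNⁿ; i.e., there exists an n×n symmetric matrix that is positive semidefinite and entrywise nonnegative but not completely positive. -/
open Matrix

/-- X is completely positive: a finite sum of outer products of nonnegative vectors. -/
def IsCompletelyPositive {n : ℕ} (X : Matrix (Fin n) (Fin n) ℝ) : Prop :=
  ∃ (m : ℕ) (y : Fin m → Fin n → ℝ), (∀ k i, 0 ≤ y k i) ∧
    X = ∑ k, vecMulVec (y k) (y k)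

lemma horn_copos (a b c d e : ℝ) (ha : 0 ≤ a) (hb : 0 ≤ b) (hc : 0 ≤ c)
    (hd : 0 ≤ d) (he : 0 ≤ e) :
    0 ≤ a^2+b^2+c^2+d^2+e^2 - 2*a*b - 2*b*c - 2*c*d - 2*d*e - 2*e*a
      + 2*a*c + 2*b*d + 2*c*e + 2*d*a + 2*e*b := by
  rcases le_total d e with h | h
  · nlinarith [sq_nonneg (a - b + c + d - e), mul_nonneg hb hd,
      mul_nonneg hc (sub_nonneg.2 h)]
  rcases le_total e a with h' | h'
  · nlinarith [sq_nonneg (b - c + d + e - a), mul_nonneg hc he,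
      mul_nonneg hd (sub_nonneg.2 h')]
  rcases le_total a b with h'' | h''
  · nlinarith [sq_nonneg (c - d + e + a - b), mul_nonneg hd ha,
      mul_nonneg he (sub_nonneg.2 h'')]
  rcases le_total b c with h3 | h3
  · nlinarith [sq_nonneg (d - e + a + b - c), mul_nonneg he hb,
      mul_nonneg ha (sub_nonneg.2 h3)]
  rcases le_total c d with h4 | h4
  · nlinarith [sq_nonneg (e - a + b + c - d), mul_nonneg ha hc,
      mul_nonneg hb (sub_nonneg.2 h4)]
  · nlinarith [sq_nonneg (a - b + c + d - e), mul_nonneg hb hd,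
      mul_nonneg hc (sub_nonneg.2 (le_trans h4 (le_trans h3 (le_trans h'' h'))))]

/-- rationalized Cholesky factor (rows are the vectors). -/
def Mv : Matrix (Fin 5) (Fin 5) ℝ :=
  !![1304,0,0,0,0; 767,1054,0,0,0; 38,921,923,0,0; 38,20,1063,754,0; 767,-510,532,551,515]

lemma Mv_nonneg : ∀ i j : Fin 5, 0 ≤ ∑ k, Mv i k * Mv j k := by
  intro i j
  fin_cases i <;> fin_cases j <;>
    norm_num [Mv, Fin.sum_univ_five, Matrix.cons_val_two, Matrix.cons_val_three, Matrix.cons_val_four]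

theorem stmt_3 {n : ℕ} (hn : 5 ≤ n) :
    ∃ X : Matrix (Fin n) (Fin n) ℝ, X.IsSymm ∧ X.PosSemidef ∧ (∀ i j, 0 ≤ X i j) ∧
      ¬ IsCompletelyPositive X := by
  set f : Fin 5 → Fin n := Fin.castLE hn with hf
  set A : Matrix (Fin 5) (Fin n) ℝ :=
    fun k i => if h : (i : ℕ) < 5 then Mv ⟨i, h⟩ k else 0 with hAdef
  refine ⟨Aᴴ * A, ?_, posSemidef_conjTranspose_mul_self A, ?_, ?_⟩
  · have h := (posSemidef_conjTranspose_mul_self A).1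
    rwa [Matrix.IsHermitian, conjTranspose_eq_transpose_of_trivial] at h
  · -- entrywise nonneg
    intro i j
    have hX : (Aᴴ * A) i j = ∑ k, A k i * A k j := by
      simp [Matrix.mul_apply, Matrix.conjTranspose_apply]
    rw [hX]
    by_cases hi : (i : ℕ) < 5
    · by_cases hj : (j : ℕ) < 5
      · have : ∀ k : Fin 5, A k i * A k j = Mv ⟨i, hi⟩ k * Mv ⟨j, hj⟩ k := by
          intro k; simp [hAdef, dif_pos hi, dif_pos hj]
        rw [Finset.sum_congr rfl fun k _ => this k]
        exact Mv_nonneg _ _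
      · simp [hAdef, dif_neg hj]
    · simp [hAdef, dif_neg hi]
  · -- not completely positive
    have hA : ∀ (k : Fin 5) (i : Fin 5), A k (f i) = Mv i k := by
      intro k i
      have h5 : ((f i : Fin n) : ℕ) < 5 := i.isLt
      have hfi : (⟨((f i : Fin n) : ℕ), h5⟩ : Fin 5) = i := Fin.ext rfl
      simp only [hAdef, dif_pos h5, hfi]
    have hE : ∀ i j : Fin 5, (Aᴴ * A) (f i) (f j) = ∑ k, Mv i k * Mv j k := by
      intro i j
      simp [Matrix.mul_apply, Matrix.conjTranspose_apply, hA]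
    rintro ⟨m, y, hy, hXeq⟩
    -- value of the Horn functional on X
    set G : ℝ :=
      (Aᴴ*A) (f 0) (f 0) + (Aᴴ*A) (f 1) (f 1) + (Aᴴ*A) (f 2) (f 2)
        + (Aᴴ*A) (f 3) (f 3) + (Aᴴ*A) (f 4) (f 4)
        - 2*(Aᴴ*A) (f 0) (f 1) - 2*(Aᴴ*A) (f 1) (f 2) - 2*(Aᴴ*A) (f 2) (f 3)
        - 2*(Aᴴ*A) (f 3) (f 4) - 2*(Aᴴ*A) (f 4) (f 0)
        + 2*(Aᴴ*A) (f 0) (f 2) + 2*(Aᴴ*A) (f 1) (f 3) + 2*(Aᴴ*A) (f 2) (f 4)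
        + 2*(Aᴴ*A) (f 3) (f 0) + 2*(Aᴴ*A) (f 4) (f 1) with hG
    have hGneg : G < 0 := by
      rw [hG, hE, hE, hE, hE, hE, hE, hE, hE, hE, hE, hE, hE, hE, hE, hE]
      norm_num [Mv, Fin.sum_univ_five, Matrix.cons_val_two, Matrix.cons_val_three, Matrix.cons_val_four]
    have hyE : ∀ i j : Fin 5, (Aᴴ * A) (f i) (f j) = ∑ k, y k (f i) * y k (f j) := by
      intro i j
      rw [hXeq]
      simp [Matrix.sum_apply, vecMulVec_apply]
    have hGsum : G = ∑ k, ((y k (f 0))^2 + (y k (f 1))^2 + (y k (f 2))^2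
        + (y k (f 3))^2 + (y k (f 4))^2
        - 2*(y k (f 0))*(y k (f 1)) - 2*(y k (f 1))*(y k (f 2)) - 2*(y k (f 2))*(y k (f 3))
        - 2*(y k (f 3))*(y k (f 4)) - 2*(y k (f 4))*(y k (f 0))
        + 2*(y k (f 0))*(y k (f 2)) + 2*(y k (f 1))*(y k (f 3)) + 2*(y k (f 2))*(y k (f 4))
        + 2*(y k (f 3))*(y k (f 0)) + 2*(y k (f 4))*(y k (f 1))) := by
      rw [hG, hyE, hyE, hyE, hyE, hyE, hyE, hyE, hyE, hyE, hyE, hyE, hyE, hyE, hyE, hyE]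
      simp only [Finset.mul_sum, ← Finset.sum_add_distrib, ← Finset.sum_sub_distrib]
      exact Finset.sum_congr rfl fun k _ => by ring
    have hGnn : 0 ≤ G := by
      rw [hGsum]
      apply Finset.sum_nonneg
      intro k _
      exact horn_copos _ _ _ _ _ (hy k _) (hy k _) (hy k _) (hy k _) (hy k _)
    linarith
end

section
/- In a connected block-clique graph, a vertex is a cut vertex if and only if it is contained in at least two distinct maximal cliques of the graph. -/
open SimpleGraph

/-- A cycle has a chord: two of its vertices are adjacent in `G` via an edge not on the cycle. -/
def HasChord {V : Type} (G : SimpleGraph V) {v : V} (c : G.Walk v v) : Prop :=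
  ∃ x y, x ∈ c.support ∧ y ∈ c.support ∧ G.Adj x y ∧ s(x, y) ∉ c.edges

/-- G is chordal: every cycle of length at least 4 has a chord. -/
def IsChordal {V : Type} (G : SimpleGraph V) : Prop :=
  ∀ (v : V) (c : G.Walk v v), c.IsCycle → 4 ≤ c.length → HasChord G c

/-- s is a maximal clique of G. -/
def IsMaxClique {V : Type} (G : SimpleGraph V) (s : Set V) : Prop :=
  G.IsClique s ∧ ∀ t : Set V, G.IsClique t → s ⊆ t → t = s

/-- v is a cut vertex of G: removing v disconnects G. -/
def IsCutVertex {V : Type} (G : SimpleGraph V) (v : V) : Prop :=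
  ¬ (SimpleGraph.induce {u | u ≠ v} G).Preconnected

section Aux
set_option linter.unusedSectionVars false
variable {V : Type} [DecidableEq V] {G : SimpleGraph V}

lemma exists_maxClique (s : Set V) (hs : G.IsClique s) :
    ∃ t, IsMaxClique G t ∧ s ⊆ t := by
  have hz : ∀ c ⊆ {t : Set V | G.IsClique t}, IsChain (· ⊆ ·) c → c.Nonempty →
      ∃ ub ∈ {t : Set V | G.IsClique t}, ∀ s ∈ c, s ⊆ ub := by
    intro c hcS hchain _
    refine ⟨⋃₀ c, ?_, fun t ht => Set.subset_sUnion_of_mem ht⟩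
    intro x hx y hy hxy
    obtain ⟨sx, hsx, hxsx⟩ := hx
    obtain ⟨sy, hsy, hysy⟩ := hy
    rcases hchain.total hsx hsy with h | h
    · exact hcS hsy (h hxsx) hysy hxy
    · exact hcS hsx hxsx (h hysy) hxy
  obtain ⟨m, hsm, hm⟩ := zorn_subset_nonempty {t : Set V | G.IsClique t} hz s hs
  exact ⟨m, ⟨hm.prop, fun t ht hmt => Set.Subset.antisymm (hm.2 ht hmt) hmt⟩, hsm⟩

lemma isClique_triple {u v w : V} (huv : G.Adj u v) (huw : G.Adj u w) (hvw : G.Adj v w) :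
    G.IsClique {u, v, w} := by
  intro x hx y hy hne
  simp only [Set.mem_insert_iff, Set.mem_singleton_iff] at hx hy
  rcases hx with rfl | rfl | rfl <;> rcases hy with rfl | rfl | rfl <;>
    first
      | exact absurd rfl hne
      | assumption
      | exact huv.symm
      | exact huw.symm
      | exact hvw.symm

lemma isClique_pair {u v : V} (huv : G.Adj u v) : G.IsClique {u, v} := by
  intro x hx y hy hne
  simp only [Set.mem_insert_iff, Set.mem_singleton_iff] at hx hy
  rcases hx with rfl | rfl <;> rcases hy with rfl | rfl <;>
    first
      | exact absurd rfl hne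
      | assumption
      | exact huv.symm

lemma edge_mem_of_length_one' {x y : V} (w : G.Walk x y) (h : w.length = 1) :
    s(x, y) ∈ w.edges := by
  cases w with
  | nil => simp at h
  | cons hadj w' =>
    simp only [SimpleGraph.Walk.length_cons] at h
    have h0 : w'.length = 0 := by omega
    have := SimpleGraph.Walk.eq_of_length_eq_zero h0
    subst this
    simp

lemma shorten {a b : V} (q : G.Walk a b) {x y : V}
    (hx : x ∈ q.support) (hy : y ∈ q.support) (hadj : G.Adj x y)
    (hne : s(x, y) ∉ q.edges) :
    ∃ r : G.Walk a b, r.length < q.length ∧ ∀ w ∈ r.support, w ∈ q.support := by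
  have hsplit := q.take_spec hx
  have hlen : (q.takeUntil x hx).length + (q.dropUntil x hx).length = q.length := by
    have := congrArg Walk.length hsplit
    rwa [Walk.length_append] at this
  have hy' : y ∈ (q.takeUntil x hx).support ∨ y ∈ (q.dropUntil x hx).support := by
    rw [← Walk.mem_support_append_iff]
    rw [hsplit]
    exact hy
  rcases hy' with hyt | hyd
  · set t := q.takeUntil x hx with ht
    have hsplit2 := t.take_spec hyt
    have hlen2 : (t.takeUntil y hyt).length + (t.dropUntil y hyt).length = t.length := by
      have := congrArg Walk.length hsplit2
      rwa [Walk.length_append] at this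
    have h1 : (t.dropUntil y hyt).length ≠ 1 := by
      intro h1
      have := edge_mem_of_length_one' _ h1
      rw [Sym2.eq_swap] at this
      exact hne (q.edges_takeUntil_subset hx (t.edges_dropUntil_subset hyt this))
    have h0 : (t.dropUntil y hyt).length ≠ 0 := by
      intro h0
      exact hadj.ne (Walk.eq_of_length_eq_zero h0).symm
    refine ⟨(t.takeUntil y hyt).append (Walk.cons hadj.symm (q.dropUntil x hx)), ?_, ?_⟩
    · rw [Walk.length_append, Walk.length_cons]
      omega
    · intro w hw
      rcases (Walk.mem_support_append_iff _ _).mp hw with h | h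
      · exact q.support_takeUntil_subset hx (t.support_takeUntil_subset hyt h)
      · rw [Walk.support_cons] at h
        rcases List.mem_cons.mp h with rfl | h
        · exact q.support_takeUntil_subset hx hyt
        · exact q.support_dropUntil_subset hx h
  · set d := q.dropUntil x hx with hd
    have hsplit2 := d.take_spec hyd
    have hlen2 : (d.takeUntil y hyd).length + (d.dropUntil y hyd).length = d.length := by
      have := congrArg Walk.length hsplit2
      rwa [Walk.length_append] at this
    have h1 : (d.takeUntil y hyd).length ≠ 1 := by
      intro h1
      have := edge_mem_of_length_one' _ h1
      exact hne (q.edges_dropUntil_subset hx (d.edges_takeUntil_subset hyd this))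
    have h0 : (d.takeUntil y hyd).length ≠ 0 := by
      intro h0
      exact hadj.ne (Walk.eq_of_length_eq_zero h0)
    refine ⟨(q.takeUntil x hx).append (Walk.cons hadj (d.dropUntil y hyd)), ?_, ?_⟩
    · rw [Walk.length_append, Walk.length_cons]
      omega
    · intro w hw
      rcases (Walk.mem_support_append_iff _ _).mp hw with h | h
      · exact q.support_takeUntil_subset hx h
      · rw [Walk.support_cons] at h
        rcases List.mem_cons.mp h with rfl | h
        · exact hx
        · exact q.support_dropUntil_subset hx (d.support_dropUntil_subset hyd h)

lemma cycle_aux {v a b : V} (q : G.Walk a b) (hq : q.IsPath) (hv : v ∉ q.support)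
    (hva : G.Adj v a) (hbv : G.Adj b v) (hab : a ≠ b) :
    (Walk.cons hva (q.concat hbv)).IsCycle := by
  rw [Walk.isCycle_def]
  refine ⟨?_, by simp, ?_⟩
  · rw [Walk.isTrail_def]
    simp only [Walk.edges_cons, Walk.edges_concat, List.concat_eq_append]
    refine List.nodup_cons.mpr ⟨?_, ?_⟩
    · intro hmem
      rcases List.mem_append.mp hmem with h | h
      · exact hv (q.fst_mem_support_of_mem_edges h)
      · simp only [List.mem_singleton] at h
        rcases Sym2.eq_iff.mp h with ⟨h1, h2⟩ | ⟨h1, h2⟩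
        · exact hva.ne h2.symm
        · exact hab h2
    · rw [List.nodup_append]
      refine ⟨hq.isTrail.edges_nodup, List.nodup_singleton _, ?_⟩
      rintro e he _ hmem rfl
      simp only [List.mem_singleton] at hmem
      subst hmem
      exact hv (q.snd_mem_support_of_mem_edges he)
  · simp only [Walk.support_cons, List.tail_cons, Walk.support_concat, List.concat_eq_append]
    rw [List.nodup_append]
    refine ⟨hq.support_nodup, List.nodup_singleton _, ?_⟩
    rintro w hw _ hw' rfl
    simp only [List.mem_singleton] at hw'
    subst hw'
    exact hv hw

/-- Key lemma: in a connected chordal graph with the block-clique property, any two distinct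
neighbours of `v` joined by a walk avoiding `v` are adjacent. -/
lemma key_adj {v : V} (hchordal : IsChordal G)
    (hbc : ∀ s t : Set V, IsMaxClique G s → IsMaxClique G t → s ≠ t → (s ∩ t).Subsingleton) :
    ∀ (n : ℕ) (a b : V) (p : G.Walk a b), p.length ≤ n → v ∉ p.support →
      G.Adj v a → G.Adj v b → a ≠ b → G.Adj a b := by
  intro n
  induction n using Nat.strong_induction_on with
  | _ n IH =>
  intro a b p hlen hvp hva hvb hab
  have hqpath : p.bypass.IsPath := p.bypass_isPath
  have hqlen : p.bypass.length ≤ n := le_trans p.length_bypass_le hlen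
  have hvq : v ∉ p.bypass.support := fun h => hvp (p.support_bypass_subset h)
  set q := p.bypass with hqdef
  clear_value q
  clear hqdef hvp hlen
  rcases Nat.lt_or_ge q.length 2 with hsmall | hbig
  · obtain ⟨w, h, q', rfl⟩ := q.exists_eq_cons_of_ne hab
    have : q'.length = 0 := by
      simp only [Walk.length_cons] at hsmall
      omega
    have hwb := Walk.eq_of_length_eq_zero this
    subst hwb
    exact h
  · have hbvadj : G.Adj b v := hvb.symm
    set c := Walk.cons hva (q.concat hbvadj) with hc
    have hcyc := cycle_aux q hqpath hvq hva hbvadj hab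
    have hclen : 4 ≤ c.length := by
      rw [hc, Walk.length_cons, Walk.length_concat]
      omega
    obtain ⟨x, y, hxs, hys, hxy, hchord⟩ := hchordal v c hcyc hclen
    have hmem : ∀ z, z ∈ c.support → z = v ∨ z ∈ q.support := by
      intro z hz
      rw [hc, Walk.support_cons] at hz
      rcases List.mem_cons.mp hz with rfl | hz
      · exact Or.inl rfl
      · rw [Walk.support_concat] at hz
        rcases List.mem_append.mp hz with hz | hz
        · exact Or.inr hz
        · simp only [List.mem_singleton] at hz
          exact Or.inl hz
    have hatv : ∀ w, w ∈ q.support → G.Adj v w → s(v, w) ∉ c.edges → G.Adj a b := by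
      intro w hw hvw hcw
      have hwa : w ≠ a := by
        rintro rfl
        exact hcw (by rw [hc, Walk.edges_cons]; exact List.mem_cons_self)
      have hwb : w ≠ b := by
        rintro rfl
        refine hcw ?_
        rw [hc, Walk.edges_cons, Walk.edges_concat, List.concat_eq_append]
        exact List.mem_cons_of_mem _
          (List.mem_append_right _ (List.mem_singleton.mpr (Sym2.eq_swap)))
      have hsplit := q.take_spec hw
      have hlen2 : (q.takeUntil w hw).length + (q.dropUntil w hw).length = q.length := by
        have := congrArg Walk.length hsplit
        rwa [Walk.length_append] at this
      have h1 : (q.takeUntil w hw).length ≠ 0 := by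
        intro h0
        exact hwa (Walk.eq_of_length_eq_zero h0).symm
      have h2 : (q.dropUntil w hw).length ≠ 0 := by
        intro h0
        exact hwb (Walk.eq_of_length_eq_zero h0)
      have hadjaw : G.Adj a w :=
        IH (q.takeUntil w hw).length (by omega) a w (q.takeUntil w hw) le_rfl
          (fun h => hvq (q.support_takeUntil_subset hw h)) hva hvw (Ne.symm hwa)
      have hadjwb : G.Adj w b :=
        IH (q.dropUntil w hw).length (by omega) w b (q.dropUntil w hw) le_rfl
          (fun h => hvq (q.support_dropUntil_subset hw h)) hvw hvb hwb
      obtain ⟨S, hS, hSsub⟩ := exists_maxClique {v, a, w} (isClique_triple hva hvw hadjaw)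
      obtain ⟨T, hT, hTsub⟩ := exists_maxClique {v, w, b} (isClique_triple hvw hvb hadjwb)
      have hST : S = T := by
        by_contra hne'
        have hsub := hbc S T hS hT hne'
        have hv1 : v ∈ S ∩ T := ⟨hSsub (by simp), hTsub (by simp)⟩
        have hw1 : w ∈ S ∩ T := ⟨hSsub (by simp), hTsub (by simp)⟩
        exact hvw.ne (hsub hv1 hw1)
      refine hS.1 (hSsub (by simp)) ?_ hab
      rw [hST]
      exact hTsub (by simp)
    rcases hmem x hxs with rfl | hxq
    · rcases hmem y hys with rfl | hyq
      · exact absurd hxy (G.irrefl)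
      · exact hatv y hyq hxy hchord
    · rcases hmem y hys with rfl | hyq
      · refine hatv x hxq hxy.symm ?_
        rwa [Sym2.eq_swap]
      · have hqedge : s(x, y) ∉ q.edges := by
          intro h
        -- edges of c contain edges of q
          refine hchord ?_
          rw [hc, Walk.edges_cons, Walk.edges_concat, List.concat_eq_append]
          exact List.mem_cons_of_mem _ (List.mem_append_left _ h)
        obtain ⟨r, hrlen, hrsup⟩ := shorten q hxq hyq hxy hqedge
        exact IH r.length (by omega) a b r le_rfl (fun h => hvq (hrsup _ h)) hva hvb hab

lemma walk_avoid_reachable {v : V} {a b : V} (p : G.Walk a b)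
    (hp : v ∉ p.support) (ha : a ≠ v) (hb : b ≠ v) :
    (SimpleGraph.induce {u | u ≠ v} G).Reachable ⟨a, ha⟩ ⟨b, hb⟩ := by
  induction p with
  | nil => exact Reachable.refl _
  | @cons a c b h q ih =>
    rw [Walk.support_cons] at hp
    have hq : v ∉ q.support := fun h' => hp (List.mem_cons_of_mem _ h')
    have hc : c ≠ v := fun h' => hq (h' ▸ q.start_mem_support)
    have hadj : (SimpleGraph.induce {u | u ≠ v} G).Adj ⟨a, ha⟩ ⟨c, hc⟩ := by
      simp only [comap_adj, Function.Embedding.coe_subtype]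
      exact h
    exact (hadj.reachable).trans (ih hq hc hb)

lemma reachable_walk_avoid {v : V} {a b : {u : V | u ≠ v}}
    (h : (SimpleGraph.induce {u | u ≠ v} G).Reachable a b) :
    ∃ p : G.Walk a.1 b.1, v ∉ p.support := by
  obtain ⟨w⟩ := h
  induction w with
  | nil =>
    rename_i x
    refine ⟨Walk.nil, ?_⟩
    simp only [Walk.support_nil, List.mem_singleton]
    exact fun h' => x.2 h'.symm
  | cons h q ih =>
    rename_i x c bb
    obtain ⟨p, hp⟩ := ih
    have hadj : G.Adj x.1 c.1 := by
      simpa only [comap_adj, Function.Embedding.coe_subtype] using h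
    refine ⟨Walk.cons hadj p, ?_⟩
    rw [Walk.support_cons]
    intro h'
    rcases List.mem_cons.mp h' with h' | h'
    · exact x.2 h'.symm
    · exact hp h'

end Aux

theorem stmt_5 {V : Type} (G : SimpleGraph V) (hconn : G.Connected)
    (hchordal : IsChordal G)
    (hbc : ∀ s t : Set V, IsMaxClique G s → IsMaxClique G t → s ≠ t →
      (s ∩ t).Subsingleton)
    (v : V) :
    IsCutVertex G v ↔
      ∃ s t : Set V, IsMaxClique G s ∧ IsMaxClique G t ∧ s ≠ t ∧ v ∈ s ∧ v ∈ t := by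
  classical
  constructor
  · intro hcut
    have hcut' : ¬ ∀ x y : {u : V | u ≠ v},
        (SimpleGraph.induce {u | u ≠ v} G).Reachable x y := hcut
    push_neg at hcut'
    obtain ⟨x, y, hxy⟩ := hcut'
    obtain ⟨w⟩ := hconn.preconnected x.1 y.1
    have hppath := w.bypass_isPath
    set p := w.bypass with hpdef
    clear_value p
    have hvp : v ∈ p.support := by
      by_contra hv
      exact hxy (walk_avoid_reachable p hv x.2 y.2)
    have hvx : v ≠ x.1 := fun h => x.2 h.symm
    have hvy : v ≠ y.1 := fun h => y.2 h.symm
    have htpath : (p.takeUntil v hvp).IsPath := hppath.takeUntil _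
    have hdpath : (p.dropUntil v hvp).IsPath := hppath.dropUntil _
    obtain ⟨u1, h1, r1, hr1⟩ := (p.takeUntil v hvp).reverse.exists_eq_cons_of_ne hvx
    obtain ⟨u2, h2, r2, hr2⟩ := (p.dropUntil v hvp).exists_eq_cons_of_ne hvy
    have hrev : (p.takeUntil v hvp).reverse.IsPath := htpath.reverse
    rw [hr1, Walk.cons_isPath_iff] at hrev
    rw [hr2, Walk.cons_isPath_iff] at hdpath
    obtain ⟨S, hS, hSsub⟩ := exists_maxClique {v, u1} (isClique_pair h1)
    obtain ⟨T, hT, hTsub⟩ := exists_maxClique {v, u2} (isClique_pair h2)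
    refine ⟨S, T, hS, hT, ?_, hSsub (by simp), hTsub (by simp)⟩
    rintro rfl
    have hu1 : u1 ∈ S := hSsub (by simp)
    have hu2 : u2 ∈ S := hTsub (by simp)
    by_cases he : u1 = u2
    · subst he
      refine hxy (walk_avoid_reachable (r1.reverse.append r2) ?_ x.2 y.2)
      intro hmem
      rcases (Walk.mem_support_append_iff _ _).mp hmem with h | h
      · exact hrev.2 (by rwa [Walk.support_reverse, List.mem_reverse] at h)
      · exact hdpath.2 h
    · have hadj12 : G.Adj u1 u2 := hS.1 hu1 hu2 he
      refine hxy (walk_avoid_reachable (r1.reverse.append (Walk.cons hadj12 r2)) ?_ x.2 y.2)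
      intro hmem
      rcases (Walk.mem_support_append_iff _ _).mp hmem with h | h
      · exact hrev.2 (by rwa [Walk.support_reverse, List.mem_reverse] at h)
      · rw [Walk.support_cons] at h
        rcases List.mem_cons.mp h with rfl | h
        · exact h1.ne rfl
        · exact hdpath.2 h
  · rintro ⟨s, t, hs, ht, hst, hvs, hvt⟩
    have has' : ∃ a, a ∈ s ∧ a ∉ t := by
      by_contra h
      push_neg at h
      exact hst (hs.2 t ht.1 h).symm
    have hbt' : ∃ b, b ∈ t ∧ b ∉ s := by
      by_contra h
      push_neg at h
      exact hst (ht.2 s hs.1 h)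
    obtain ⟨a, has, hat⟩ := has'
    obtain ⟨b, hbt, hbs⟩ := hbt'
    have hav : a ≠ v := fun h => hat (h ▸ hvt)
    have hbv : b ≠ v := fun h => hbs (h ▸ hvs)
    have hva : G.Adj v a := hs.1 hvs has (fun h => hav h.symm)
    have hvb : G.Adj v b := ht.1 hvt hbt (fun h => hbv h.symm)
    have hab : a ≠ b := fun h => hbs (h ▸ has)
    intro hpre
    have hreach := hpre ⟨a, hav⟩ ⟨b, hbv⟩
    obtain ⟨p, hvp⟩ := reachable_walk_avoid hreach
    have hadj := key_adj hchordal hbc p.length a b p le_rfl hvp hva hvb hab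
    obtain ⟨U, hU, hUsub⟩ := exists_maxClique {v, a, b} (isClique_triple hva hvb hadj)
    have hUs : U = s := by
      by_contra hne
      have hsub := hbc U s hU hs hne
      exact hav (hsub ⟨hUsub (by simp), hvs⟩ ⟨hUsub (by simp), has⟩).symm
    exact hbs (hUs ▸ hUsub (by simp : b ∈ ({v, a, b} : Set V)))
end

section
/- Let Ñ = {2,…,n} and assume Q⁰_Ñ ∈ S^{n−1}₊, Qᵖ ∈ Sⁿ₊ for p ∈ I_eq, and Qᵖ_Ñ ∈ S^{n−1}₊ for p ∈ I_ineq. Then the optimal values of COP(Γⁿ), COP(CPPⁿ), and COP(DNNⁿ) coincide: ζ(DNNⁿ) = ζ(CPPⁿ) = ζ(Γⁿ). -/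
open Matrix

def Gamma (n : ℕ) : Set (Matrix (Fin n) (Fin n) ℝ) :=
  {X | ∃ x : Fin n → ℝ, (∀ i, 0 ≤ x i) ∧ X = vecMulVec x x}

def CPP (n : ℕ) : Set (Matrix (Fin n) (Fin n) ℝ) := convexHull ℝ (Gamma n)

def DNN (n : ℕ) : Set (Matrix (Fin n) (Fin n) ℝ) :=
  {X | X.PosSemidef ∧ ∀ i j, 0 ≤ X i j}

/-- The feasible region of COP(K). -/
def copFeas {n : ℕ} {ι : Type} (Ieq Iineq : Finset ι)
    (Q : ι → Matrix (Fin (n + 1)) (Fin (n + 1)) ℝ)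
    (K : Set (Matrix (Fin (n + 1)) (Fin (n + 1)) ℝ)) :
    Set (Matrix (Fin (n + 1)) (Fin (n + 1)) ℝ) :=
  {X | X ∈ K ∧ X 0 0 = 1 ∧ (∀ p ∈ Ieq, trace (Q p * X) = 0) ∧
    ∀ p ∈ Iineq, trace (Q p * X) ≤ 0}

/-- The optimal value ζ(K) of COP(K). -/
noncomputable def copVal {n : ℕ} {ι : Type} (Ieq Iineq : Finset ι)
    (Q0 : Matrix (Fin (n + 1)) (Fin (n + 1)) ℝ)
    (Q : ι → Matrix (Fin (n + 1)) (Fin (n + 1)) ℝ)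
    (K : Set (Matrix (Fin (n + 1)) (Fin (n + 1)) ℝ)) : ℝ :=
  sInf ((fun X => trace (Q0 * X)) '' copFeas Ieq Iineq Q K)

/- ### Auxiliary lemmas -/

open scoped MatrixOrder in
lemma posSemidef_iff_eq_transpose_mul_self {m : ℕ} {A : Matrix (Fin m) (Fin m) ℝ} :
    A.PosSemidef ↔ ∃ B : Matrix (Fin m) (Fin m) ℝ, A = Bᴴ * B := by
  constructor
  · intro h
    obtain ⟨B, hB⟩ := CStarAlgebra.nonneg_iff_eq_star_mul_self.mp h.nonneg
    exact ⟨B, by rw [hB, star_eq_conjTranspose]⟩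
  · rintro ⟨B, rfl⟩
    exact posSemidef_conjTranspose_mul_self B

lemma trace_mul_transpose_mul {m : ℕ} (Q B : Matrix (Fin m) (Fin m) ℝ) :
    trace (Q * (Bᴴ * B)) = ∑ i, (fun j => B i j) ⬝ᵥ Q *ᵥ (fun j => B i j) := by
  simp only [trace, diag, mul_apply, conjTranspose_apply, star_trivial, dotProduct, mulVec,
    Finset.mul_sum, Finset.sum_mul]
  refine (Finset.sum_congr rfl fun a _ => Finset.sum_comm).trans (Finset.sum_comm.trans ?_)
  exact Finset.sum_congr rfl fun c _ => Finset.sum_congr rfl fun a _ =>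
    Finset.sum_congr rfl fun b _ => by ring

lemma trace_mul_vecMulVec {m : ℕ} (Q : Matrix (Fin m) (Fin m) ℝ) (x : Fin m → ℝ) :
    trace (Q * vecMulVec x x) = x ⬝ᵥ Q *ᵥ x := by
  simp only [trace, diag, mul_apply, vecMulVec_apply, dotProduct, mulVec, Finset.mul_sum]
  exact Finset.sum_congr rfl fun i _ => Finset.sum_congr rfl fun j _ => by ring

lemma quad_expand {m : ℕ} (X : Matrix (Fin (m+1)) (Fin (m+1)) ℝ)
    (hsym : ∀ i j, X i j = X j i) (v : Fin (m+1) → ℝ) (t : ℝ) :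
    (fun i => v i + if i = 0 then t else 0) ⬝ᵥ X *ᵥ (fun i => v i + if i = 0 then t else 0) =
      X 0 0 * (t*t) + (2 * (v ⬝ᵥ fun i => X i 0)) * t + v ⬝ᵥ X *ᵥ v := by
  simp only [dotProduct, mulVec, mul_ite, mul_zero, mul_one, add_mul, mul_add,
    Finset.sum_add_distrib, ite_mul, zero_mul, Finset.sum_ite_eq', Finset.mem_univ, if_true,
    Finset.mul_sum, Finset.sum_mul]
  have h2 : ∑ x : Fin (m+1), ∑ x1 : Fin (m+1), (if x = 0 then t * (X x x1 * v x1) else 0)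
      = ∑ x1 : Fin (m+1), t * (X x1 0 * v x1) := by
    rw [Finset.sum_comm]
    simp only [Finset.sum_ite_eq', Finset.mem_univ, if_true]
    exact Finset.sum_congr rfl fun j _ => by rw [hsym 0 j]
  rw [h2]
  have h4 : (∑ x1 : Fin (m+1), t * (X x1 0 * v x1)) + ∑ x : Fin (m+1), v x * (X x 0 * t)
      = ∑ i : Fin (m+1), 2 * (v i * X i 0) * t := by
    rw [← Finset.sum_add_distrib]
    exact Finset.sum_congr rfl fun i _ => by ring
  rw [← h4]; ring

lemma cs_ineq {m : ℕ} {X : Matrix (Fin (m+1)) (Fin (m+1)) ℝ} (hX : X.PosSemidef)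
    (h00 : X 0 0 = 1) (v : Fin (m+1) → ℝ) :
    (v ⬝ᵥ fun i => X i 0) * (v ⬝ᵥ fun i => X i 0) ≤ v ⬝ᵥ X *ᵥ v := by
  have hsym : ∀ i j, X i j = X j i := fun i j => by
    have := congrFun (congrFun hX.1 j) i
    simpa [conjTranspose_apply] using this
  have key : ∀ t : ℝ, 0 ≤ 1 * (t*t) + (2 * (v ⬝ᵥ fun i => X i 0)) * t + v ⬝ᵥ X *ᵥ v := by
    intro t
    have h := hX.dotProduct_mulVec_nonneg (fun i => v i + if i = 0 then t else 0)
    simp only [star_trivial] at h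
    rw [quad_expand X hsym v t, h00] at h
    exact h
  have hd := discrim_le_zero key
  rw [discrim] at hd
  nlinarith [hd]

lemma dot_vecMulVec {m : ℕ} (x v : Fin m → ℝ) :
    v ⬝ᵥ (vecMulVec x x) *ᵥ v = (v ⬝ᵥ x) * (v ⬝ᵥ x) := by
  simp only [dotProduct, mulVec, vecMulVec_apply, Finset.mul_sum, Finset.sum_mul]
  exact Finset.sum_congr rfl fun i _ => Finset.sum_congr rfl fun j _ => by ring

lemma vecMulVec_isHermitian {m : ℕ} (x : Fin m → ℝ) : (vecMulVec x x).IsHermitian := by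
  ext i j
  simp [conjTranspose_apply, vecMulVec_apply, mul_comm]

lemma vecMulVec_posSemidef {m : ℕ} (x : Fin m → ℝ) : (vecMulVec x x).PosSemidef := by
  refine .of_dotProduct_mulVec_nonneg (vecMulVec_isHermitian x) fun v => ?_
  simp only [star_trivial]
  rw [dot_vecMulVec]
  exact mul_self_nonneg _

lemma trace_nonneg_general {m : ℕ} {Q Y : Matrix (Fin m) (Fin m) ℝ} (hY : Y.PosSemidef)
    (hQ : ∀ v : Fin m → ℝ, 0 ≤ v ⬝ᵥ Q *ᵥ v) : 0 ≤ trace (Q * Y) := by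
  obtain ⟨B, rfl⟩ := posSemidef_iff_eq_transpose_mul_self.mp hY
  rw [trace_mul_transpose_mul]
  exact Finset.sum_nonneg fun i _ => hQ _

lemma trace_nonneg_zero {m : ℕ} {Q Y : Matrix (Fin (m+1)) (Fin (m+1)) ℝ} (hY : Y.PosSemidef)
    (h00 : Y 0 0 = 0) (hQ : ∀ v : Fin (m+1) → ℝ, v 0 = 0 → 0 ≤ v ⬝ᵥ Q *ᵥ v) :
    0 ≤ trace (Q * Y) := by
  obtain ⟨B, rfl⟩ := posSemidef_iff_eq_transpose_mul_self.mp hY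
  have hB0 : ∀ i, B i 0 = 0 := by
    have h : ∑ i, B i 0 * B i 0 = 0 := by
      simpa [mul_apply, conjTranspose_apply] using h00
    intro i
    have := (Finset.sum_eq_zero_iff_of_nonneg
      (fun i _ => mul_self_nonneg (B i 0))).mp h i (Finset.mem_univ i)
    exact mul_self_eq_zero.mp this
  rw [trace_mul_transpose_mul]
  exact Finset.sum_nonneg fun i _ => hQ _ (hB0 i)

lemma schur_psd {m : ℕ} {X : Matrix (Fin (m+1)) (Fin (m+1)) ℝ} (hX : X.PosSemidef)
    (h00 : X 0 0 = 1) :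
    (X - vecMulVec (fun i => X i 0) (fun i => X i 0)).PosSemidef := by
  refine .of_dotProduct_mulVec_nonneg (hX.1.sub (vecMulVec_isHermitian _)) fun v => ?_
  simp only [star_trivial, sub_mulVec, dotProduct_sub]
  rw [dot_vecMulVec]
  have := cs_ineq hX h00 v
  linarith

lemma gamma_subset_dnn (m : ℕ) : Gamma m ⊆ DNN m := by
  rintro X ⟨x, hx, rfl⟩
  exact ⟨vecMulVec_posSemidef x, fun i j => by
    simp only [vecMulVec_apply]; exact mul_nonneg (hx i) (hx j)⟩

lemma convex_dnn (m : ℕ) : Convex ℝ (DNN m) := by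
  rintro X ⟨hX, hXn⟩ Y ⟨hY, hYn⟩ a b ha hb hab
  have hsymX : ∀ i j, X j i = X i j := fun i j => by
    have := congrFun (congrFun hX.1 i) j
    simpa [conjTranspose_apply] using this
  have hsymY : ∀ i j, Y j i = Y i j := fun i j => by
    have := congrFun (congrFun hY.1 i) j
    simpa [conjTranspose_apply] using this
  have hherm : (a • X + b • Y).IsHermitian := by
    ext i j
    simp only [conjTranspose_apply, Matrix.add_apply, Matrix.smul_apply, smul_eq_mul, star_trivial,
      star_add, star_mul']
    rw [hsymX j i, hsymY j i]
  refine ⟨.of_dotProduct_mulVec_nonneg hherm fun v => ?_, fun i j => ?_⟩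
  · simp only [star_trivial, add_mulVec, smul_mulVec, dotProduct_add, dotProduct_smul,
      smul_eq_mul]
    have h1 := hX.dotProduct_mulVec_nonneg v
    have h2 := hY.dotProduct_mulVec_nonneg v
    simp only [star_trivial] at h1 h2
    have := add_nonneg (mul_nonneg ha h1) (mul_nonneg hb h2)
    linarith
  · simp only [Matrix.add_apply, Matrix.smul_apply, smul_eq_mul]
    exact add_nonneg (mul_nonneg ha (hXn i j)) (mul_nonneg hb (hYn i j))

lemma sInf_eq_of_subset_of_dominates (S T : Set ℝ) (hST : S ⊆ T)
    (h : ∀ y ∈ T, ∃ z ∈ S, z ≤ y) : sInf S = sInf T := by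
  rcases T.eq_empty_or_nonempty with hT | hT
  · have hS : S = ∅ := Set.subset_empty_iff.mp (hT ▸ hST)
    rw [hT, hS]
  obtain ⟨y, hy⟩ := hT
  obtain ⟨z, hzS, hzy⟩ := h y hy
  by_cases hbd : BddBelow T
  · refine le_antisymm ?_ (csInf_le_csInf hbd ⟨z, hzS⟩ hST)
    refine le_csInf ⟨y, hy⟩ fun w hw => ?_
    obtain ⟨u, huS, hu⟩ := h w hw
    exact (csInf_le (hbd.mono hST) huS).trans hu
  · have hbdS : ¬ BddBelow S := by
      rintro ⟨b, hb⟩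
      exact hbd ⟨b, fun w hw => by
        obtain ⟨u, huS, hu⟩ := h w hw
        exact (hb huS).trans hu⟩
    rw [csInf_of_not_bddBelow hbdS, csInf_of_not_bddBelow hbd]

theorem stmt_8 {n : ℕ} {ι : Type} (Ieq Iineq : Finset ι) (hdisj : Disjoint Ieq Iineq)
    (Q0 : Matrix (Fin (n + 1)) (Fin (n + 1)) ℝ)
    (Q : ι → Matrix (Fin (n + 1)) (Fin (n + 1)) ℝ)
    (hQ0sym : Q0.IsSymm) (hQsym : ∀ p, (Q p).IsSymm)
    -- Q⁰_Ñ is positive semidefinite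
    (hQ0 : ∀ x : Fin (n + 1) → ℝ, x 0 = 0 → 0 ≤ x ⬝ᵥ Q0.mulVec x)
    -- Qᵖ ∈ Sⁿ₊ for p ∈ I_eq
    (hQeq : ∀ p ∈ Ieq, (Q p).PosSemidef)
    -- Qᵖ_Ñ is positive semidefinite for p ∈ I_ineq
    (hQineq : ∀ p ∈ Iineq, ∀ x : Fin (n + 1) → ℝ, x 0 = 0 → 0 ≤ x ⬝ᵥ (Q p).mulVec x) :
    copVal Ieq Iineq Q0 Q (DNN (n + 1)) = copVal Ieq Iineq Q0 Q (CPP (n + 1)) ∧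
    copVal Ieq Iineq Q0 Q (CPP (n + 1)) = copVal Ieq Iineq Q0 Q (Gamma (n + 1)) := by
  -- subsets of cones
  have hGC : Gamma (n+1) ⊆ CPP (n+1) := subset_convexHull ℝ _
  have hCD : CPP (n+1) ⊆ DNN (n+1) := convexHull_min (gamma_subset_dnn (n+1)) (convex_dnn (n+1))
  -- feasible set inclusions
  have hFeasGC : copFeas Ieq Iineq Q (Gamma (n+1)) ⊆ copFeas Ieq Iineq Q (CPP (n+1)) :=
    fun X ⟨h1, h2⟩ => ⟨hGC h1, h2⟩
  have hFeasCD : copFeas Ieq Iineq Q (CPP (n+1)) ⊆ copFeas Ieq Iineq Q (DNN (n+1)) :=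
    fun X ⟨h1, h2⟩ => ⟨hCD h1, h2⟩
  -- key reduction: from a DNN-feasible point get a Gamma-feasible point with smaller objective
  have key : ∀ X ∈ copFeas Ieq Iineq Q (DNN (n+1)),
      ∃ X' ∈ copFeas Ieq Iineq Q (Gamma (n+1)), trace (Q0 * X') ≤ trace (Q0 * X) := by
    rintro X ⟨⟨hXpsd, hXnn⟩, hX00, hXeq, hXineq⟩
    set x : Fin (n+1) → ℝ := fun i => X i 0 with hxdef
    set Y : Matrix (Fin (n+1)) (Fin (n+1)) ℝ := X - vecMulVec x x with hYdef
    have hYpsd : Y.PosSemidef := schur_psd hXpsd hX00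
    have hY00 : Y 0 0 = 0 := by
      simp only [hYdef, Matrix.sub_apply, vecMulVec_apply, hxdef, hX00]
      ring
    have hsplit : ∀ A : Matrix (Fin (n+1)) (Fin (n+1)) ℝ,
        trace (A * X) = trace (A * vecMulVec x x) + trace (A * Y) := by
      intro A
      rw [hYdef, Matrix.mul_sub, trace_sub]
      ring
    refine ⟨vecMulVec x x, ⟨⟨x, fun i => hXnn i 0, rfl⟩, ?_, ?_, ?_⟩, ?_⟩
    · simp only [vecMulVec_apply, hxdef, hX00]; ring
    · intro p hp
      have hqf : 0 ≤ trace (Q p * vecMulVec x x) := by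
        rw [trace_mul_vecMulVec]
        have := (hQeq p hp).dotProduct_mulVec_nonneg x
        simpa using this
      have hY : 0 ≤ trace (Q p * Y) :=
        trace_nonneg_general hYpsd fun v => by
          have := (hQeq p hp).dotProduct_mulVec_nonneg v
          simpa using this
      have := hsplit (Q p)
      rw [hXeq p hp] at this
      linarith
    · intro p hp
      have hY : 0 ≤ trace (Q p * Y) := trace_nonneg_zero hYpsd hY00 (hQineq p hp)
      have := hsplit (Q p)
      have h0 := hXineq p hp
      linarith
    · have hY : 0 ≤ trace (Q0 * Y) := trace_nonneg_zero hYpsd hY00 hQ0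
      have := hsplit Q0
      linarith
  -- images
  set f : Matrix (Fin (n+1)) (Fin (n+1)) ℝ → ℝ := fun X => trace (Q0 * X) with hfdef
  have himGC : f '' copFeas Ieq Iineq Q (Gamma (n+1)) ⊆ f '' copFeas Ieq Iineq Q (CPP (n+1)) :=
    Set.image_mono hFeasGC
  have himCD : f '' copFeas Ieq Iineq Q (CPP (n+1)) ⊆ f '' copFeas Ieq Iineq Q (DNN (n+1)) :=
    Set.image_mono hFeasCD
  have hdom : ∀ y ∈ f '' copFeas Ieq Iineq Q (DNN (n+1)),
      ∃ z ∈ f '' copFeas Ieq Iineq Q (Gamma (n+1)), z ≤ y := by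
    rintro y ⟨X, hX, rfl⟩
    obtain ⟨X', hX', hle⟩ := key X hX
    exact ⟨f X', ⟨X', hX', rfl⟩, hle⟩
  have h1 : sInf (f '' copFeas Ieq Iineq Q (Gamma (n+1)))
      = sInf (f '' copFeas Ieq Iineq Q (DNN (n+1))) :=
    sInf_eq_of_subset_of_dominates _ _ (himGC.trans himCD) hdom
  have h2 : sInf (f '' copFeas Ieq Iineq Q (Gamma (n+1)))
      = sInf (f '' copFeas Ieq Iineq Q (CPP (n+1))) :=
    sInf_eq_of_subset_of_dominates _ _ himGC fun y hy => hdom y (himCD hy)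
  constructor
  · show sInf _ = sInf _
    rw [← h1, h2]
  · show sInf _ = sInf _
    rw [← h2, h1, ← h1]
end

section
/- Let K ∈ {Γⁿ, CPPⁿ, DNNⁿ} and suppose the aggregated sparsity condition {(i,j) : Qᵖᵢⱼ ≠ 0} ⊆ Ē holds for all p ∈ {0} ∪ I_eq ∪ I_ineq, where Ē = E ∪ {(i,i) : i ∈ N} and G(N,E) is a block-clique graph with maximal cliques C₁,…,C_ℓ. Then the optimal value ζ(K) of COP(K) equals the optimal value η(K) of the decomposed problem in which the cone constraint X ∈ K is replaced by the constraints X_{C_q} ∈ K^{C_q} for q = 1,…,ℓ. -/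
open Matrix SimpleGraph

/-- X_C ∈ Γ^C. -/
def GammaOn {n : ℕ} (X : Matrix (Fin n) (Fin n) ℝ) (C : Set (Fin n)) : Prop :=
  ∃ y : Fin n → ℝ, (∀ i, 0 ≤ y i) ∧ ∀ i ∈ C, ∀ j ∈ C, X i j = y i * y j

/-- X_C ∈ CPP^C. -/
def IsCPOn {n : ℕ} (X : Matrix (Fin n) (Fin n) ℝ) (C : Set (Fin n)) : Prop :=
  ∃ (m : ℕ) (y : Fin m → Fin n → ℝ), (∀ k i, 0 ≤ y k i) ∧
    ∀ i ∈ C, ∀ j ∈ C, X i j = ∑ k, y k i * y k j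

/-- X_C ∈ DNN^C. -/
def IsDNNOn {n : ℕ} (X : Matrix (Fin n) (Fin n) ℝ) (C : Set (Fin n)) : Prop :=
  (∀ i ∈ C, ∀ j ∈ C, 0 ≤ X i j) ∧
    ∀ x : Fin n → ℝ, (∀ i, i ∉ C → x i = 0) → 0 ≤ x ⬝ᵥ X.mulVec x

section Walks
variable {V : Type} {G : SimpleGraph V}

/-- Walk along `w 0, w 1, ..., w k`. -/
def pathWalk (w : ℕ → V) : ∀ (k : ℕ), (∀ j, j < k → G.Adj (w j) (w (j+1))) → G.Walk (w 0) (w k)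
  | 0, _ => .nil
  | k+1, h => (pathWalk w k (fun j hj => h j (Nat.lt_succ_of_lt hj))).concat (h k (Nat.lt_succ_self k))

lemma pathWalk_support (w : ℕ → V) : ∀ (k : ℕ) (h : ∀ j, j < k → G.Adj (w j) (w (j+1))),
    (pathWalk w k h).support = (List.range (k+1)).map w
  | 0, _ => by simp [pathWalk, List.range_succ]
  | k+1, h => by
    rw [pathWalk, Walk.support_concat, pathWalk_support w k, List.range_succ (n := k+1)]
    simp

lemma pathWalk_edges (w : ℕ → V) : ∀ (k : ℕ) (h : ∀ j, j < k → G.Adj (w j) (w (j+1))),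
    (pathWalk w k h).edges = (List.range k).map (fun j => s(w j, w (j+1)))
  | 0, _ => by simp [pathWalk]
  | k+1, h => by
    rw [pathWalk, Walk.edges_concat, pathWalk_edges w k, List.range_succ (n := k)]
    simp

lemma pathWalk_length (w : ℕ → V) : ∀ (k : ℕ) (h : ∀ j, j < k → G.Adj (w j) (w (j+1))),
    (pathWalk w k h).length = k
  | 0, _ => rfl
  | k+1, h => by rw [pathWalk, Walk.length_concat, pathWalk_length w k]

end Walks

section Chord
variable {V : Type} [DecidableEq V] {G : SimpleGraph V}

lemma cycle_chord (hch : IsChordal G) (w : ℕ → V) (m : ℕ) (hm : 3 ≤ m)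
    (hinj : ∀ i j, i ≤ m → j ≤ m → w i = w j → i = j)
    (hadj : ∀ j, j < m → G.Adj (w j) (w (j+1))) (hlast : G.Adj (w m) (w 0)) :
    ∃ i j, i < j ∧ j ≤ m ∧ j ≠ i + 1 ∧ ¬(i = 0 ∧ j = m) ∧ G.Adj (w i) (w j) := by
  set c : G.Walk (w 0) (w 0) := (pathWalk w m hadj).concat hlast with hc
  have hsupp : c.support = ((List.range (m+1)).map w).concat (w 0) := by
    rw [hc, Walk.support_concat, pathWalk_support, List.concat_eq_append]
  have hedges : c.edges = (List.range (m+1)).map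
      (fun j => s(w j, w (if j = m then 0 else j+1))) := by
    rw [hc, Walk.edges_concat, pathWalk_edges, List.range_succ, List.map_append]
    simp only [List.concat_eq_append]
    congr 1
    · apply List.map_congr_left
      intro j hj
      rw [List.mem_range] at hj
      rw [if_neg (Nat.ne_of_lt hj)]
    · simp
  have hmemsupp : ∀ x ∈ c.support, ∃ i, i ≤ m ∧ x = w i := by
    intro x hx
    rw [hsupp, List.concat_eq_append, List.mem_append] at hx
    rcases hx with hx | hx
    · rcases List.mem_map.1 hx with ⟨i, hi, rfl⟩
      exact ⟨i, Nat.lt_succ_iff.1 (List.mem_range.1 hi), rfl⟩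
    · simp only [List.mem_singleton] at hx
      exact ⟨0, Nat.zero_le _, hx⟩
  have hedgemem : ∀ j, j ≤ m → s(w j, w (if j = m then 0 else j+1)) ∈ c.edges := by
    intro j hj
    rw [hedges]
    exact List.mem_map.2 ⟨j, List.mem_range.2 (Nat.lt_succ_of_le hj), rfl⟩
  have hcyc : c.IsCycle := by
    constructor
    constructor
    constructor
    · -- edges nodup
      rw [hedges]
      apply List.Nodup.map_on
      · intro i hi j hj hij
        rw [List.mem_range, Nat.lt_succ_iff] at hi hj
        rcases Sym2.eq_iff.1 hij with ⟨h1, h2⟩ | ⟨h1, h2⟩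
        · exact hinj _ _ hi hj h1
        · -- w i = w (if j = m then 0 else j+1), w (if i = m then 0 else i+1) = w j
          by_cases hjm : j = m
          · rw [if_pos hjm] at h1
            have : i = 0 := hinj _ _ hi (Nat.zero_le _) h1
            subst this
            rw [if_neg (by omega)] at h2
            have : 1 = j := hinj _ _ (by omega) hj h2
            omega
          · rw [if_neg hjm] at h1
            have hij' : i = j + 1 := hinj _ _ hi (by omega) h1
            by_cases him : i = m
            · rw [if_pos him] at h2
              have : (0:ℕ) = j := hinj _ _ (Nat.zero_le _) hj h2
              omega
            · rw [if_neg him] at h2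
              have : i + 1 = j := hinj _ _ (by omega) hj h2
              omega
      · exact List.nodup_range
    · -- ≠ nil
      intro hnil
      have := congrArg Walk.length hnil
      rw [hc, Walk.length_concat, pathWalk_length] at this
      simp at this
    · -- support tail nodup
      rw [hsupp, List.range_succ_eq_map, List.map_cons, List.concat_eq_append,
        List.cons_append, List.tail_cons]
      have : (List.map w (List.map Nat.succ (List.range m))) ++ [w 0]
          = List.map w ((List.map Nat.succ (List.range m)) ++ [0]) := by
        rw [List.map_append]; rfl
      rw [this]
      apply List.Nodup.map_on
      · intro i hi j hj hij
        have hi' : i ≤ m := by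
          rcases List.mem_append.1 hi with h | h
          · rcases List.mem_map.1 h with ⟨a, ha, rfl⟩
            have := List.mem_range.1 ha; omega
          · simp only [List.mem_singleton] at h; omega
        have hj' : j ≤ m := by
          rcases List.mem_append.1 hj with h | h
          · rcases List.mem_map.1 h with ⟨a, ha, rfl⟩
            have := List.mem_range.1 ha; omega
          · simp only [List.mem_singleton] at h; omega
        exact hinj _ _ hi' hj' hij
      · rw [List.nodup_append]
        refine ⟨List.Nodup.map Nat.succ_injective (List.nodup_range), List.nodup_singleton _, ?_⟩
        intro a ha
        rcases List.mem_map.1 ha with ⟨b, _, rfl⟩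
        simp
  have hlen : 4 ≤ c.length := by
    rw [hc, Walk.length_concat, pathWalk_length]; omega
  obtain ⟨x, y, hx, hy, hxy, hne⟩ := hch _ c hcyc hlen
  obtain ⟨i, hi, rfl⟩ := hmemsupp x hx
  obtain ⟨j, hj, rfl⟩ := hmemsupp y hy
  have hij : i ≠ j := fun h => G.ne_of_adj hxy (by rw [h])
  -- consecutive pairs are edges
  have key : ∀ a b, a ≤ m → b ≤ m → (b = a + 1 ∨ (a = 0 ∧ b = m)) → s(w a, w b) ∈ c.edges := by
    intro a b ha hb hab
    rcases hab with hb1 | ⟨ha0, hbm⟩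
    · subst hb1
      have := hedgemem a (by omega)
      rwa [if_neg (by omega)] at this
    · have := hedgemem m le_rfl
      rw [if_pos rfl] at this
      rw [ha0, hbm, Sym2.eq_swap]
      exact this
  rcases Nat.lt_or_ge i j with hlt | hge
  · refine ⟨i, j, hlt, hj, ?_, ?_, hxy⟩
    · intro h; exact hne (key i j hi hj (Or.inl h))
    · intro ⟨h0, hm'⟩; exact hne (key i j hi hj (Or.inr ⟨h0, hm'⟩))
  · have hlt : j < i := lt_of_le_of_ne hge (Ne.symm hij)
    refine ⟨j, i, hlt, hi, ?_, ?_, hxy.symm⟩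
    · intro h; exact hne (by rw [Sym2.eq_swap]; exact key j i hj hi (Or.inl h))
    · intro ⟨h0, hm'⟩; exact hne (by rw [Sym2.eq_swap]; exact key j i hj hi (Or.inr ⟨h0, hm'⟩))

end Chord


section Cliques
variable {V : Type} [Fintype V] [DecidableEq V] {G : SimpleGraph V}

lemma exists_max_clique_superset (s : Finset V) (hs : G.IsClique (↑s : Set V)) :
    ∃ t : Finset V, s ⊆ t ∧ IsMaxClique G (↑t : Set V) := by
  classical
  let F : Finset (Finset V) := Finset.univ.filter (fun t => G.IsClique (↑t : Set V) ∧ s ⊆ t)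
  have hsF : s ∈ F := by simp [F, hs]
  obtain ⟨t, htF, hmax⟩ := F.exists_max_image Finset.card ⟨s, hsF⟩
  simp only [F, Finset.mem_filter, Finset.mem_univ, true_and] at htF
  refine ⟨t, htF.2, htF.1, ?_⟩
  intro t' ht' hsub
  have htfin : t'.Finite := Set.toFinite t'
  have h1 : t ⊆ htfin.toFinset := by
    intro x hx
    rw [Set.Finite.mem_toFinset]
    exact hsub hx
  have h2 : htfin.toFinset ∈ F := by
    simp only [F, Finset.mem_filter, Finset.mem_univ, true_and]
    constructor
    · rwa [Set.Finite.coe_toFinset]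
    · exact (Finset.coe_subset.1 (by rw [Set.Finite.coe_toFinset]; exact subset_trans (Finset.coe_subset.2 htF.2) hsub))
  have := hmax _ h2
  have heq : htfin.toFinset = t := Finset.eq_of_subset_of_card_le h1 this |>.symm
  rw [← Set.Finite.coe_toFinset htfin, heq]

end Cliques

section Chain
variable {V : Type} [Fintype V] [DecidableEq V] {G : SimpleGraph V} {ℓ : ℕ}
  {C : Fin ℓ → Finset V}

lemma pair_in_clique (hall : ∀ s : Finset V, IsMaxClique G (↑s : Set V) → ∃ q, C q = s)
    (i j : V) (h : i = j ∨ G.Adj i j) : ∃ q, i ∈ C q ∧ j ∈ C q := by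
  have hcl : G.IsClique (↑({i, j} : Finset V) : Set V) := by
    intro x hx y hy hxy
    simp only [Finset.coe_insert, Finset.coe_singleton, Set.mem_insert_iff,
      Set.mem_singleton_iff] at hx hy
    rcases h with rfl | hadj
    · rcases hx with rfl | rfl <;> rcases hy with rfl | rfl <;> simp_all
    · rcases hx with rfl | rfl <;> rcases hy with rfl | rfl
      · exact absurd rfl hxy
      · exact hadj
      · exact hadj.symm
      · exact absurd rfl hxy
  obtain ⟨t, hst, hmaxt⟩ := exists_max_clique_superset _ hcl
  obtain ⟨q, rfl⟩ := hall t hmaxt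
  exact ⟨q, hst (by simp), hst (by simp)⟩

lemma triple_in_clique (hall : ∀ s : Finset V, IsMaxClique G (↑s : Set V) → ∃ q, C q = s)
    (a b c : V) (hab : G.Adj a b) (hbc : G.Adj b c) (hac : G.Adj a c) :
    ∃ q, a ∈ C q ∧ b ∈ C q ∧ c ∈ C q := by
  have hcl : G.IsClique (↑({a, b, c} : Finset V) : Set V) := by
    intro x hx y hy hxy
    simp only [Finset.coe_insert, Finset.coe_singleton, Set.mem_insert_iff,
      Set.mem_singleton_iff] at hx hy
    rcases hx with rfl | rfl | rfl <;> rcases hy with rfl | rfl | rfl <;>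
      first
        | exact absurd rfl hxy
        | exact hab | exact hab.symm | exact hbc | exact hbc.symm
        | exact hac | exact hac.symm
  obtain ⟨t, hst, hmaxt⟩ := exists_max_clique_superset _ hcl
  obtain ⟨q, rfl⟩ := hall t hmaxt
  exact ⟨q, hst (by simp), hst (by simp), hst (by simp)⟩

lemma two_in_two_cliques (hbc : ∀ q r, q ≠ r → ((C q) ∩ (C r)).card ≤ 1)
    {a b : V} {q r : Fin ℓ} (hqr : q ≠ r) (hab : a ≠ b)
    (h1 : a ∈ C q) (h2 : b ∈ C q) (h3 : a ∈ C r) (h4 : b ∈ C r) : False := by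
  have hsub : ({a, b} : Finset V) ⊆ C q ∩ C r := by
    intro x hx
    rcases Finset.mem_insert.1 hx with rfl | hx
    · exact Finset.mem_inter.2 ⟨h1, h3⟩
    · rw [Finset.mem_singleton] at hx; subst hx
      exact Finset.mem_inter.2 ⟨h2, h4⟩
  have := Finset.card_le_card hsub
  rw [Finset.card_pair hab] at this
  have := hbc q r hqr
  omega

lemma adj_of_clique (hmax : ∀ q, IsMaxClique G ((C q : Finset V) : Set V))
    {a b : V} {q : Fin ℓ} (hab : a ≠ b) (h1 : a ∈ C q) (h2 : b ∈ C q) : G.Adj a b :=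
  (hmax q).1 (by simpa using h1) (by simpa using h2) hab

end Chain

section ChainMain
variable {V : Type} [Fintype V] [DecidableEq V] {G : SimpleGraph V} {ℓ : ℕ}
  {C : Fin ℓ → Finset V}

lemma chain_lemma (hch : IsChordal G)
    (hmax : ∀ q, IsMaxClique G ((C q : Finset V) : Set V))
    (hall : ∀ s : Finset V, IsMaxClique G (↑s : Set V) → ∃ q, C q = s)
    (hbc : ∀ q r, q ≠ r → ((C q) ∩ (C r)).card ≤ 1) :
    ∀ m, 1 ≤ m → ∀ (w : ℕ → V) (t : ℕ → Fin ℓ) (s : Fin ℓ),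
    (∀ i j, i ≤ m → j ≤ m → w i = w j → i = j) →
    (∀ i, 1 ≤ i → i ≤ m → w (i-1) ∈ C (t i) ∧ w i ∈ C (t i)) →
    (∀ i, 1 ≤ i → i < m → t i ≠ t (i+1)) →
    w 0 ∈ C s → w m ∈ C s → s ≠ t 1 → s ≠ t m → False := by
  intro m
  induction m using Nat.strong_induction_on with
  | _ m IH =>
  intro hm w t s hinj hmem hlab h0 hml hs1 hsm
  -- basic adjacency facts
  have hne : ∀ i j, i ≤ m → j ≤ m → i ≠ j → w i ≠ w j := by
    intro i j hi hj hij h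
    exact hij (hinj i j hi hj h)
  have hadj : ∀ j, j < m → G.Adj (w j) (w (j+1)) := by
    intro j hj
    have h1 := hmem (j+1) (by omega) (by omega)
    have e : j + 1 - 1 = j := by omega
    rw [e] at h1
    exact adj_of_clique hmax (hne j (j+1) (by omega) (by omega) (by omega)) h1.1 h1.2
  rcases Nat.lt_or_ge m 3 with hm3 | hm3
  · -- m = 1 or m = 2
    interval_cases m
    · -- m = 1
      exact two_in_two_cliques hbc hs1 (hne 0 1 (by omega) (by omega) (by omega))
        h0 hml (hmem 1 le_rfl le_rfl).1 (hmem 1 le_rfl le_rfl).2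
    · -- m = 2 : triangle
      have h01 : G.Adj (w 0) (w 1) := hadj 0 (by omega)
      have h12 : G.Adj (w 1) (w 2) := hadj 1 (by omega)
      have h02 : G.Adj (w 0) (w 2) :=
        adj_of_clique hmax (hne 0 2 (by omega) (by omega) (by omega)) h0 hml
      obtain ⟨r, hr0, hr1, hr2⟩ := triple_in_clique hall _ _ _ h01 h12 h02
      have e1 : r = t 1 := by
        by_contra hrt
        exact two_in_two_cliques hbc hrt (hne 0 1 (by omega) (by omega) (by omega))
          hr0 hr1 (hmem 1 (by omega) (by omega)).1 (hmem 1 (by omega) (by omega)).2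
      have e2 : r = t 2 := by
        by_contra hrt
        have hm2 := hmem 2 (by omega) (by omega)
        exact two_in_two_cliques hbc hrt (hne 1 2 (by omega) (by omega) (by omega))
          hr1 hr2 hm2.1 hm2.2
      exact (hlab 1 (by omega) (by omega)) (e1 ▸ e2)
  · -- m ≥ 3 : use chordality
    have hlastadj : G.Adj (w m) (w 0) :=
      adj_of_clique hmax (hne m 0 le_rfl (by omega) (by omega)) hml h0
    obtain ⟨i, j, hij, hjm, hjne, hnotend, hchord⟩ :=
      cycle_chord hch w m hm3 hinj hadj hlastadj
    have hji2 : i + 2 ≤ j := by omega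
    have hjim : j - i ≤ m - 1 := by
      rcases Nat.eq_zero_or_pos i with rfl | hi
      · have : j ≠ m := fun h => hnotend ⟨rfl, h⟩
        omega
      · omega
    obtain ⟨r, hri, hrj⟩ := pair_in_clique hall (w i) (w j) (Or.inr hchord)
    -- helper to apply IH on a subchain  w (a+0), w (a+1), ..., w (a+m'),
    -- with labels t (a+k) and closing clique s'
    have applyIH : ∀ (a m' : ℕ) (s' : Fin ℓ), 1 ≤ m' → a + m' ≤ m → m' < m →
        w a ∈ C s' → w (a + m') ∈ C s' → s' ≠ t (a + 1) → s' ≠ t (a + m') → False := by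
      intro a m' s' h1 h2 h3 hws0 hwsm hne1 hne2
      apply IH m' h3 h1 (fun k => w (a + k)) (fun k => t (a + k)) s'
      · intro x y hx hy hxy
        have := hinj (a+x) (a+y) (by omega) (by omega) hxy
        omega
      · intro k hk1 hk2
        have h := hmem (a+k) (by omega) (by omega)
        have e : a + (k - 1) = a + k - 1 := by omega
        rw [e]
        exact h
      · intro k hk1 hk2
        have e : a + (k + 1) = (a + k) + 1 := by omega
        rw [e]
        exact hlab (a+k) (by omega) (by omega)
      · simpa using hws0
      · exact hwsm
      · simpa using hne1
      · exact hne2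
    by_cases hb : r = t j
    · -- case (b)
      by_cases hb2 : t j = t (i+1)
      · -- sub-subcase : t j = t (i+1), need j ≥ i + 3
        have hji3 : i + 3 ≤ j := by
          rcases Nat.lt_or_ge (i+2) j with h | h
          · omega
          · exfalso
            have hj2 : j = i + 2 := by omega
            have := hlab (i+1) (by omega) (by omega)
            rw [← hj2] at this
            exact this hb2.symm
        apply applyIH (i+1) (j - i - 2) (t (i+1)) (by omega) (by omega) (by omega)
        · exact (hmem (i+1) (by omega) (by omega)).2
        · have e : i + 1 + (j - i - 2) = j - 1 := by omega
          rw [e, ← hb2]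
          have h := hmem j (by omega) (by omega)
          exact h.1
        · have e : i + 1 + 1 = i + 2 := by omega
          rw [e]
          exact hlab (i+1) (by omega) (by omega)
        · have e : i + 1 + (j - i - 2) = j - 1 := by omega
          rw [e]
          intro h
          have h2 := hlab (j-1) (by omega) (by omega)
          have e2 : j - 1 + 1 = j := by omega
          rw [e2] at h2
          exact h2 (h.symm.trans hb2.symm)
      · -- subcase t j ≠ t (i+1) : chain w i .. w (j-1) closing t j
        apply applyIH i (j - 1 - i) (t j) (by omega) (by omega) (by omega)
        · rw [← hb]; exact hri
        · have e : i + (j - 1 - i) = j - 1 := by omega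
          rw [e]
          exact (hmem j (by omega) (by omega)).1
        · exact hb2
        · have e : i + (j - 1 - i) = j - 1 := by omega
          rw [e]
          intro h
          have := hlab (j-1) (by omega) (by omega)
          have e2 : j - 1 + 1 = j := by omega
          rw [e2] at this
          exact this (by rw [← h])
    · by_cases hc : r = t (i+1)
      · -- case (c) : chain w (i+1) .. w j closing r = t (i+1)
        apply applyIH (i+1) (j - i - 1) r (by omega) (by omega) (by omega)
        · rw [hc]; exact (hmem (i+1) (by omega) (by omega)).2
        · have e : i + 1 + (j - i - 1) = j := by omega
          rw [e]; exact hrj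
        · have e : i + 1 + 1 = i + 2 := by omega
          rw [e, hc]
          exact hlab (i+1) (by omega) (by omega)
        · have e : i + 1 + (j - i - 1) = j := by omega
          rw [e]; exact hb
      · -- case (a) : chain w i .. w j closing r
        apply applyIH i (j - i) r (by omega) (by omega) (by omega)
        · exact hri
        · have e : i + (j - i) = j := by omega
          rw [e]; exact hrj
        · exact hc
        · have e : i + (j - i) = j := by omega
          rw [e]; exact hb

end ChainMain

section Leaf
variable {V : Type} [Fintype V] [DecidableEq V] {G : SimpleGraph V} {ℓ : ℕ}
  {C : Fin ℓ → Finset V}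

lemma leaf_lemma (hch : IsChordal G)
    (hmax : ∀ q, IsMaxClique G ((C q : Finset V) : Set V))
    (hall : ∀ s : Finset V, IsMaxClique G (↑s : Set V) → ∃ q, C q = s)
    (hbc : ∀ q r, q ≠ r → ((C q) ∩ (C r)).card ≤ 1)
    (S : Finset (Fin ℓ)) (hS : S.Nonempty) :
    ∃ q ∈ S, ((C q) ∩ (S.erase q).biUnion C).card ≤ 1 := by
  classical
  by_contra hcon
  push_neg at hcon
  -- every clique in S has ≥ 2 vertices shared with other cliques of S
  have hshared : ∀ q ∈ S, ∃ x y : V, x ≠ y ∧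
      (x ∈ C q ∧ ∃ q' ∈ S, q' ≠ q ∧ x ∈ C q') ∧
      (y ∈ C q ∧ ∃ q' ∈ S, q' ≠ q ∧ y ∈ C q') := by
    intro q hq
    have h2 := hcon q hq
    obtain ⟨x, hx, y, hy, hxy⟩ := Finset.one_lt_card.1 h2
    rw [Finset.mem_inter, Finset.mem_biUnion] at hx hy
    obtain ⟨hx1, qx, hqx, hx2⟩ := hx
    obtain ⟨hy1, qy, hqy, hy2⟩ := hy
    exact ⟨x, y, hxy, ⟨hx1, qx, Finset.mem_of_mem_erase hqx,
        Finset.ne_of_mem_erase hqx, hx2⟩,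
      ⟨hy1, qy, Finset.mem_of_mem_erase hqy, Finset.ne_of_mem_erase hqy, hy2⟩⟩
  -- the type of "states"
  let Good : Fin ℓ × V → Prop := fun p =>
    p.1 ∈ S ∧ p.2 ∈ C p.1 ∧ ∃ q' ∈ S, q' ≠ p.1 ∧ p.2 ∈ C q'
  have hstep : ∀ p, Good p → ∃ p' : Fin ℓ × V, Good p' ∧
      p'.1 ≠ p.1 ∧ p.2 ∈ C p'.1 ∧ p'.2 ≠ p.2 := by
    rintro ⟨q, v⟩ ⟨hq, hv, q', hq'S, hq'ne, hvq'⟩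
    obtain ⟨x, y, hxy, ⟨hx1, hxs⟩, ⟨hy1, hys⟩⟩ := hshared q' hq'S
    by_cases hxv : x = v
    · exact ⟨(q', y), ⟨hq'S, hy1, hys⟩, hq'ne, hvq', by simp [← hxv, Ne.symm hxy]⟩
    · exact ⟨(q', x), ⟨hq'S, hx1, hxs⟩, hq'ne, hvq', hxv⟩
  -- initial state
  obtain ⟨q0, hq0⟩ := hS
  obtain ⟨x0, y0, _, ⟨hx1, hxs⟩, _⟩ := hshared q0 hq0
  have hGood0 : Good (q0, x0) := ⟨hq0, hx1, hxs⟩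
  -- build the sequence
  let F : {p : Fin ℓ × V // Good p} → {p : Fin ℓ × V // Good p} := fun p =>
    ⟨Classical.choose (hstep p.1 p.2), (Classical.choose_spec (hstep p.1 p.2)).1⟩
  let seq : ℕ → {p : Fin ℓ × V // Good p} := fun n => F^[n] ⟨(q0, x0), hGood0⟩
  have hseq_succ : ∀ n, seq (n+1) = F (seq n) := by
    intro n
    simp only [seq, Function.iterate_succ_apply']
  set w : ℕ → V := fun n => (seq n).1.2 with hw
  set t : ℕ → Fin ℓ := fun n => (seq n).1.1 with ht
  have hprop : ∀ n, t (n+1) ≠ t n ∧ w n ∈ C (t (n+1)) ∧ w (n+1) ≠ w n := by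
    intro n
    have h2 := (Classical.choose_spec (hstep (seq n).1 (seq n).2)).2
    have e : seq (n+1) = F (seq n) := hseq_succ n
    show (seq (n+1)).1.1 ≠ (seq n).1.1 ∧ (seq n).1.2 ∈ C (seq (n+1)).1.1 ∧
      (seq (n+1)).1.2 ≠ (seq n).1.2
    rw [e]
    exact h2
  have hmem' : ∀ n, w n ∈ C (t n) := fun n => (seq n).2.2.1
  -- pigeonhole
  have hnotinj : ∃ a b, a < b ∧ w a = w b := by
    obtain ⟨a, b, hne', hab⟩ := Finite.exists_ne_map_eq_of_infinite w
    rcases Nat.lt_or_ge a b with h | h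
    · exact ⟨a, b, h, hab⟩
    · exact ⟨b, a, lt_of_le_of_ne h (Ne.symm hne'), hab.symm⟩
  have hP : ∃ b, ∃ a, a < b ∧ w a = w b := by
    obtain ⟨a, b, h1, h2⟩ := hnotinj
    exact ⟨b, a, h1, h2⟩
  let b0 := Nat.find hP
  obtain ⟨a, hab, hwab⟩ : ∃ a, a < b0 ∧ w a = w b0 := Nat.find_spec hP
  have hmindist : ∀ i j, i < j → j < b0 → w i ≠ w j := by
    intro i j h1 h2 h3
    exact Nat.find_min hP h2 ⟨i, h1, h3⟩
  have hba2 : a + 2 ≤ b0 := by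
    by_contra h
    have hb1 : b0 = a + 1 := by omega
    have := (hprop a).2.2
    rw [← hb1] at this
    exact this hwab.symm
  -- apply the chain lemma to  w a, w (a+1), ..., w (b0-1)  closing with C (t b0)
  have hchain := chain_lemma (C := C) hch hmax hall hbc
  have hinj' : ∀ i j, i ≤ b0 - 1 - a → j ≤ b0 - 1 - a → w (a + i) = w (a + j) → i = j := by
    intro i j hi hj hij
    by_contra hne'
    rcases Nat.lt_or_ge i j with h | h
    · exact hmindist (a+i) (a+j) (by omega) (by omega) hij
    · exact hmindist (a+j) (a+i) (by omega) (by omega) hij.symm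
  have hmemc : ∀ i, 1 ≤ i → w (a + i - 1) ∈ C (t (a + i)) ∧ w (a+i) ∈ C (t (a+i)) := by
    intro i hi
    constructor
    · have := (hprop (a + i - 1)).2.1
      have e : a + i - 1 + 1 = a + i := by omega
      rwa [e] at this
    · exact hmem' (a+i)
  have hlabc : ∀ i, t (a + i) ≠ t (a + i + 1) := by
    intro i
    have := (hprop (a+i)).1
    exact fun h => this (by rw [← h])
  by_cases hkey : t b0 = t (a + 1)
  · -- degenerate case
    have hb3 : a + 3 ≤ b0 := by
      by_contra h
      have hb2' : b0 = a + 2 := by omega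
      apply hlabc 1
      rw [show a + 1 + 1 = a + 2 by omega, ← hb2', hkey]
    apply hchain (b0 - a - 2) (by omega) (fun k => w (a + 1 + k)) (fun k => t (a + 1 + k)) (t (a+1))
    · intro i j hi hj hij
      have e1 : a + 1 + i = a + (1 + i) := by omega
      have e2 : a + 1 + j = a + (1 + j) := by omega
      rw [e1, e2] at hij
      have := hinj' (1+i) (1+j) (by omega) (by omega) hij
      omega
    · intro i h1 h2
      have e1 : a + 1 + (i - 1) = a + (1 + i) - 1 := by omega
      have e2 : a + 1 + i = a + (1 + i) := by omega
      rw [e1, e2]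
      exact hmemc (1 + i) (by omega)
    · intro i h1 h2
      have e : a + 1 + (i + 1) = a + (1 + i) + 1 := by omega
      have e2 : a + 1 + i = a + (1 + i) := by omega
      rw [e, e2]
      exact hlabc (1 + i)
    · simpa using hmem' (a+1)
    · have e : a + 1 + (b0 - a - 2) = b0 - 1 := by omega
      rw [e, ← hkey]
      have := (hprop (b0 - 1)).2.1
      have e2 : b0 - 1 + 1 = b0 := by omega
      rwa [e2] at this
    · exact hlabc 1
    · have e : a + 1 + (b0 - a - 2) = b0 - 1 := by omega
      rw [e]
      intro h
      have h2 := (hprop (b0-1)).1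
      rw [show b0 - 1 + 1 = b0 by omega] at h2
      exact h2 (hkey.trans h)
  · -- main case
    apply hchain (b0 - 1 - a) (by omega) (fun k => w (a + k)) (fun k => t (a + k)) (t b0)
    · exact hinj'
    · intro i h1 h2
      have e : a + (i - 1) = a + i - 1 := by omega
      rw [e]
      exact hmemc i h1
    · intro i h1 h2
      exact hlabc i
    · simp only [Nat.add_zero]
      rw [hwab]
      exact hmem' b0
    · have e : a + (b0 - 1 - a) = b0 - 1 := by omega
      rw [e]
      have := (hprop (b0 - 1)).2.1
      have e2 : b0 - 1 + 1 = b0 := by omega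
      rwa [e2] at this
    · exact hkey
    · have e : a + (b0 - 1 - a) = b0 - 1 := by omega
      rw [e]
      intro h
      have h2 := hlabc (b0 - 1 - a)
      rw [e, show b0 - 1 + 1 = b0 by omega] at h2
      exact h2 h.symm

end Leaf

section Complete
variable {V : Type} [Fintype V] [DecidableEq V] {ℓ : ℕ}

lemma completion_induction
    (P : Matrix V V ℝ → Finset V → Prop)
    (C : Fin ℓ → Finset V)
    (hleaf : ∀ S : Finset (Fin ℓ), S.Nonempty →
      ∃ q ∈ S, ((C q) ∩ (S.erase q).biUnion C).card ≤ 1)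
    (X : Matrix V V ℝ) (hX : X.IsSymm) (hXq : ∀ q, P X (C q))
    (hloc : ∀ (Y Z : Matrix V V ℝ) (A : Finset V), P Y A →
      (∀ i ∈ A, ∀ j ∈ A, Y i j = Z i j) → P Z A)
    (hglue : ∀ (X1 X2 : Matrix V V ℝ) (A B : Finset V),
      P X1 A → P X2 B → X1.IsSymm → X2.IsSymm →
      (∀ i j : V, i ∉ A ∨ j ∉ A → X1 i j = 0) → (∀ i j : V, i ∉ B ∨ j ∉ B → X2 i j = 0) →
      (A ∩ B).card ≤ 1 → (∀ v ∈ A ∩ B, X1 v v = X2 v v) →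
      ∃ Y : Matrix V V ℝ, Y.IsSymm ∧ (∀ i j : V, i ∉ A ∪ B ∨ j ∉ A ∪ B → Y i j = 0) ∧
        P Y (A ∪ B) ∧
        (∀ i ∈ A, ∀ j ∈ A, Y i j = X1 i j) ∧ (∀ i ∈ B, ∀ j ∈ B, Y i j = X2 i j)) :
    ∀ S : Finset (Fin ℓ), S.Nonempty →
    ∃ Y : Matrix V V ℝ, Y.IsSymm ∧
      (∀ i j : V, i ∉ S.biUnion C ∨ j ∉ S.biUnion C → Y i j = 0) ∧
      P Y (S.biUnion C) ∧ ∀ q ∈ S, ∀ i ∈ C q, ∀ j ∈ C q, Y i j = X i j := by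
  classical
  -- restriction of X to a clique
  have hbase : ∀ q : Fin ℓ, ∃ Y : Matrix V V ℝ, Y.IsSymm ∧
      (∀ i j : V, i ∉ C q ∨ j ∉ C q → Y i j = 0) ∧ P Y (C q) ∧
      (∀ i ∈ C q, ∀ j ∈ C q, Y i j = X i j) := by
    intro q
    refine ⟨Matrix.of (fun i j => if i ∈ C q ∧ j ∈ C q then X i j else 0), ?_, ?_, ?_, ?_⟩
    · unfold Matrix.IsSymm
      ext i j
      simp only [Matrix.transpose_apply, Matrix.of_apply]
      by_cases h1 : i ∈ C q <;> by_cases h2 : j ∈ C q <;>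
        simp [h1, h2, and_comm]
      · exact congrFun (congrFun hX j) i ▸ rfl
    · intro i j hij
      simp only [Matrix.of_apply]
      rcases hij with h | h <;> simp [h]
    · apply hloc X _ (C q) (hXq q)
      intro i hi j hj
      simp [hi, hj]
    · intro i hi j hj
      simp [hi, hj]
  intro S
  induction S using Finset.strongInduction with
  | _ S IH =>
  intro hS
  obtain ⟨q, hqS, hleafq⟩ := hleaf S hS
  by_cases hsing : S.erase q = ∅
  · -- S = {q}
    have hSq : S = {q} := by
      apply Finset.eq_singleton_iff_unique_mem.2
      refine ⟨hqS, fun x hx => ?_⟩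
      by_contra hxq
      exact (Finset.ne_empty_of_mem (Finset.mem_erase.2 ⟨hxq, hx⟩)) hsing
    obtain ⟨Y, h1, h2, h3, h4⟩ := hbase q
    refine ⟨Y, h1, ?_, ?_, ?_⟩
    · rw [hSq, Finset.singleton_biUnion]
      exact h2
    · rw [hSq, Finset.singleton_biUnion]
      exact h3
    · intro q' hq' i hi j hj
      rw [hSq, Finset.mem_singleton] at hq'
      subst hq'
      exact h4 i hi j hj
  · obtain ⟨Y1, h1symm, h1supp, h1P, h1agr⟩ := hbase q
    have hS'ne : (S.erase q).Nonempty := Finset.nonempty_of_ne_empty hsing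
    obtain ⟨Y2, h2symm, h2supp, h2P, h2agr⟩ :=
      IH (S.erase q) (Finset.erase_ssubset hqS) hS'ne
    have hdiag : ∀ v ∈ C q ∩ (S.erase q).biUnion C, Y1 v v = Y2 v v := by
      intro v hv
      rw [Finset.mem_inter] at hv
      obtain ⟨hv1, hv2⟩ := hv
      rw [h1agr v hv1 v hv1]
      obtain ⟨r, hr, hvr⟩ := Finset.mem_biUnion.1 hv2
      rw [h2agr r hr v hvr v hvr]
    obtain ⟨Y, hYsymm, hYsupp, hYP, hYA, hYB⟩ :=
      hglue Y1 Y2 (C q) ((S.erase q).biUnion C) h1P h2P h1symm h2symm h1supp h2supp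
        hleafq hdiag
    refine ⟨Y, hYsymm, ?_, ?_, ?_⟩
    · intro i j hij
      apply hYsupp
      have e : C q ∪ (S.erase q).biUnion C = S.biUnion C := by
        conv_rhs => rw [← Finset.insert_erase hqS]
        rw [Finset.biUnion_insert]
      rw [e]
      exact hij
    · have e : C q ∪ (S.erase q).biUnion C = S.biUnion C := by
        conv_rhs => rw [← Finset.insert_erase hqS]
        rw [Finset.biUnion_insert]
      rw [← e]
      exact hYP
    · intro q' hq' i hi j hj
      by_cases hqq : q' = q
      · subst hqq
        rw [hYA i hi j hj]
        exact h1agr i hi j hj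
      · have hq'e : q' ∈ S.erase q := Finset.mem_erase.2 ⟨hqq, hq'⟩
        have hiU : i ∈ (S.erase q).biUnion C := Finset.mem_biUnion.2 ⟨q', hq'e, hi⟩
        have hjU : j ∈ (S.erase q).biUnion C := Finset.mem_biUnion.2 ⟨q', hq'e, hj⟩
        rw [hYB i hiU j hjU]
        exact h2agr q' hq'e i hi j hj

end Complete

section MatHelpers
variable {V : Type} [Fintype V] [DecidableEq V]

lemma dot_rank1 (f g x : V → ℝ) :
    x ⬝ᵥ (Matrix.of fun i j => f i * g j).mulVec x
      = (∑ i, x i * f i) * (∑ j, g j * x j) := by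
  simp only [dotProduct, Matrix.mulVec, Matrix.of_apply]
  rw [Finset.sum_mul_sum]
  apply Finset.sum_congr rfl
  intro i _
  rw [Finset.mul_sum]
  apply Finset.sum_congr rfl
  intro j _
  ring

lemma quad_restrict (X : Matrix V V ℝ) (A : Finset V)
    (hs : ∀ i j, i ∉ A ∨ j ∉ A → X i j = 0) (x : V → ℝ) :
    x ⬝ᵥ X.mulVec x =
      (fun i => if i ∈ A then x i else 0) ⬝ᵥ X.mulVec (fun i => if i ∈ A then x i else 0) := by
  simp only [dotProduct, Matrix.mulVec]
  apply Finset.sum_congr rfl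
  intro i _
  by_cases hi : i ∈ A
  · simp only [hi, if_true]
    congr 1
    apply Finset.sum_congr rfl
    intro j _
    by_cases hj : j ∈ A
    · simp [hj]
    · simp [hj, hs i j (Or.inr hj)]
  · simp only [hi, if_false, zero_mul]
    have : ∀ j, X i j * x j = 0 := by
      intro j
      rw [hs i j (Or.inl hi), zero_mul]
    rw [Finset.sum_congr rfl (fun j _ => this j), Finset.sum_const_zero, mul_zero]

lemma sum_sq_eq_zero {κ : Type} [Fintype κ] (f : κ → ℝ) (h : ∑ k, f k * f k = 0) (k : κ) :
    f k = 0 := by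
  have h1 : ∀ k' ∈ Finset.univ, 0 ≤ f k' * f k' := fun k' _ => mul_self_nonneg _
  have := (Finset.sum_eq_zero_iff_of_nonneg h1).1 h k (Finset.mem_univ k)
  exact mul_self_eq_zero.1 this

end MatHelpers

section CPGlue
variable {V : Type} [Fintype V] [DecidableEq V]

/-- Finset version of IsCPOn. -/
def CPOn (X : Matrix V V ℝ) (A : Finset V) : Prop :=
  ∃ (m : ℕ) (y : Fin m → V → ℝ), (∀ k i, 0 ≤ y k i) ∧
    ∀ i ∈ A, ∀ j ∈ A, X i j = ∑ k, y k i * y k j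

lemma CPOn_of_fintype {κ : Type} [Fintype κ] {X : Matrix V V ℝ} {A : Finset V}
    (y : κ → V → ℝ) (hy : ∀ k i, 0 ≤ y k i)
    (h : ∀ i ∈ A, ∀ j ∈ A, X i j = ∑ k, y k i * y k j) : CPOn X A := by
  let e := Fintype.equivFin κ
  refine ⟨Fintype.card κ, fun k => y (e.symm k), fun k i => hy _ _, ?_⟩
  intro i hi j hj
  rw [h i hi j hj]
  exact (Equiv.sum_comp e.symm (fun k => y k i * y k j)).symm

lemma cp_glue (X1 X2 : Matrix V V ℝ) (A B : Finset V)
    (h1 : CPOn X1 A) (h2 : CPOn X2 B)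
    (hs1 : ∀ i j : V, i ∉ A ∨ j ∉ A → X1 i j = 0)
    (hs2 : ∀ i j : V, i ∉ B ∨ j ∉ B → X2 i j = 0)
    (hcard : (A ∩ B).card ≤ 1) (hdiag : ∀ v ∈ A ∩ B, X1 v v = X2 v v) :
    ∃ Y : Matrix V V ℝ, Y.IsSymm ∧ (∀ i j : V, i ∉ A ∪ B ∨ j ∉ A ∪ B → Y i j = 0) ∧
      CPOn Y (A ∪ B) ∧
      (∀ i ∈ A, ∀ j ∈ A, Y i j = X1 i j) ∧ (∀ i ∈ B, ∀ j ∈ B, Y i j = X2 i j) := by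
  classical
  obtain ⟨m1, y1, hy1, hr1⟩ := h1
  obtain ⟨m2, y2, hy2, hr2⟩ := h2
  set a : Fin m1 → V → ℝ := fun k i => if i ∈ A then y1 k i else 0 with ha
  set b : Fin m2 → V → ℝ := fun l i => if i ∈ B then y2 l i else 0 with hb
  have hra : ∀ i ∈ A, ∀ j ∈ A, X1 i j = ∑ k, a k i * a k j := by
    intro i hi j hj
    simp only [ha, hi, hj, if_true]
    exact hr1 i hi j hj
  have hrb : ∀ i ∈ B, ∀ j ∈ B, X2 i j = ∑ l, b l i * b l j := by
    intro i hi j hj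
    simp only [hb, hi, hj, if_true]
    exact hr2 i hi j hj
  have hann : ∀ k i, 0 ≤ a k i := by
    intro k i
    simp only [ha]
    split
    · exact hy1 k i
    · exact le_refl 0
  have hbnn : ∀ l i, 0 ≤ b l i := by
    intro l i
    simp only [hb]
    split
    · exact hy2 l i
    · exact le_refl 0
  have hasupp : ∀ k i, i ∉ A → a k i = 0 := by intro k i hi; simp [ha, hi]
  have hbsupp : ∀ l i, i ∉ B → b l i = 0 := by intro l i hi; simp [hb, hi]
  by_cases hz : ∀ v ∈ A ∩ B, X1 v v = 0
  · -- direct sum construction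
    have hacross : ∀ k, ∀ i ∈ B, a k i = 0 := by
      intro k i hiB
      by_cases hiA : i ∈ A
      · have hiAB : i ∈ A ∩ B := Finset.mem_inter.2 ⟨hiA, hiB⟩
        have h0 : X1 i i = 0 := hz i hiAB
        rw [hra i hiA i hiA] at h0
        exact sum_sq_eq_zero _ h0 k
      · exact hasupp k i hiA
    set z : (Fin m1 ⊕ Fin m2) → V → ℝ := Sum.elim a b with hzdef
    set Y : Matrix V V ℝ := Matrix.of (fun i j => ∑ p, z p i * z p j) with hY
    have hYapp : ∀ i j, Y i j = (∑ k, a k i * a k j) + (∑ l, b l i * b l j) := by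
      intro i j
      simp only [hY, Matrix.of_apply, hzdef]
      rw [Fintype.sum_sum_type]
      simp
    refine ⟨Y, ?_, ?_, ?_, ?_, ?_⟩
    · unfold Matrix.IsSymm
      ext i j
      simp only [Matrix.transpose_apply, hY, Matrix.of_apply]
      apply Finset.sum_congr rfl
      intro p _
      ring
    · intro i j hij
      rw [hYapp]
      rcases hij with h | h
      · have hiA : i ∉ A := fun hh => h (Finset.mem_union_left _ hh)
        have hiB : i ∉ B := fun hh => h (Finset.mem_union_right _ hh)
        simp [hasupp _ _ hiA, hbsupp _ _ hiB]
      · have hjA : j ∉ A := fun hh => h (Finset.mem_union_left _ hh)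
        have hjB : j ∉ B := fun hh => h (Finset.mem_union_right _ hh)
        simp [hasupp _ _ hjA, hbsupp _ _ hjB]
    · refine CPOn_of_fintype z (fun p i => ?_) (fun i _ j _ => by simp [hY])
      cases p with
      | inl k => exact hann k i
      | inr l => exact hbnn l i
    · intro i hi j hj
      rw [hYapp, hra i hi j hj]
      have : ∀ l, b l i * b l j = 0 := by
        intro l
        by_cases hiB : i ∈ B
        · -- then i ∈ A ∩ B, so X2 i i = X1 i i = 0 hence b l i = 0
          have hiAB : i ∈ A ∩ B := Finset.mem_inter.2 ⟨hi, hiB⟩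
          have h0 : X2 i i = 0 := by
            rw [← hdiag i hiAB]
            exact hz i hiAB
          rw [hrb i hiB i hiB] at h0
          rw [sum_sq_eq_zero _ h0 l, zero_mul]
        · rw [hbsupp l i hiB, zero_mul]
      rw [Finset.sum_congr rfl (fun l _ => this l), Finset.sum_const_zero, add_zero]
    · intro i hi j hj
      rw [hYapp, hrb i hi j hj]
      have : ∀ k, a k i * a k j = 0 := fun k => by rw [hacross k i hi, zero_mul]
      rw [Finset.sum_congr rfl (fun k _ => this k), Finset.sum_const_zero, zero_add]
  · -- single positive overlap vertex
    push_neg at hz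
    obtain ⟨v, hvAB, hvne⟩ := hz
    have hvA : v ∈ A := (Finset.mem_inter.1 hvAB).1
    have hvB : v ∈ B := (Finset.mem_inter.1 hvAB).2
    have hABv : ∀ x ∈ A ∩ B, x = v := fun x hx => Finset.card_le_one.1 hcard x hx v hvAB
    have hSa : ∑ k, a k v * a k v = X1 v v := (hra v hvA v hvA).symm
    have hSb : ∑ l, b l v * b l v = X1 v v := by
      rw [hdiag v hvAB]
      exact (hrb v hvB v hvB).symm
    have hnn : 0 ≤ X1 v v := by
      rw [← hSa]
      exact Finset.sum_nonneg (fun k _ => mul_self_nonneg _)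
    set σ : ℝ := Real.sqrt (X1 v v) with hσ
    have hσsq : σ * σ = X1 v v := Real.mul_self_sqrt hnn
    have hσnn : 0 ≤ σ := Real.sqrt_nonneg _
    set z : Fin m1 × Fin m2 → V → ℝ := fun p i =>
      if i ∈ A then (b p.2 v / σ) * a p.1 i
      else if i ∈ B then (a p.1 v / σ) * b p.2 i else 0 with hzdef
    have hznn : ∀ p i, 0 ≤ z p i := by
      intro p i
      simp only [hzdef]
      split
      · exact mul_nonneg (div_nonneg (hbnn _ _) hσnn) (hann _ _)
      · split
        · exact mul_nonneg (div_nonneg (hann _ _) hσnn) (hbnn _ _)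
        · exact le_refl 0
    have hzA : ∀ i ∈ A, ∀ k l, z (k, l) i = (b l v / σ) * a k i := by
      intro i hi k l
      simp [hzdef, hi]
    have hzB : ∀ i ∈ B, ∀ k l, z (k, l) i = (a k v / σ) * b l i := by
      intro i hi k l
      by_cases hiA : i ∈ A
      · have : i = v := hABv i (Finset.mem_inter.2 ⟨hiA, hi⟩)
        subst this
        simp only [hzdef, hiA, if_true]
        ring
      · simp [hzdef, hiA, hi]
    have hzsupp : ∀ p i, i ∉ A ∪ B → z p i = 0 := by
      intro p i hi
      have hiA : i ∉ A := fun hh => hi (Finset.mem_union_left _ hh)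
      have hiB : i ∉ B := fun hh => hi (Finset.mem_union_right _ hh)
      simp [hzdef, hiA, hiB]
    have key : ∀ (c : Fin m2 → ℝ) (d : Fin m1 → ℝ),
        ∑ p : Fin m1 × Fin m2, c p.2 * d p.1 = (∑ l, c l) * (∑ k, d k) := by
      intro c d
      rw [Fintype.sum_prod_type]
      have : ∀ k : Fin m1, ∑ l, c l * d k = (∑ l, c l) * d k := by
        intro k
        rw [Finset.sum_mul]
      rw [Finset.sum_congr rfl (fun k _ => this k), ← Finset.mul_sum]
    have hcoefb : ∑ l, (b l v / σ) * (b l v / σ) = 1 := by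
      have he : ∀ l : Fin m2, (b l v / σ) * (b l v / σ) = (b l v * b l v) / (X1 v v) := by
        intro l
        rw [div_mul_div_comm, hσsq]
      rw [Finset.sum_congr rfl (fun l _ => he l), ← Finset.sum_div, hSb, div_self hvne]
    have hcoefa : ∑ k, (a k v / σ) * (a k v / σ) = 1 := by
      have he : ∀ k : Fin m1, (a k v / σ) * (a k v / σ) = (a k v * a k v) / (X1 v v) := by
        intro k
        rw [div_mul_div_comm, hσsq]
      rw [Finset.sum_congr rfl (fun k _ => he k), ← Finset.sum_div, hSa, div_self hvne]
    set Y : Matrix V V ℝ := Matrix.of (fun i j => ∑ p, z p i * z p j) with hY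
    refine ⟨Y, ?_, ?_, ?_, ?_, ?_⟩
    · unfold Matrix.IsSymm
      ext i j
      simp only [Matrix.transpose_apply, hY, Matrix.of_apply]
      apply Finset.sum_congr rfl
      intro p _
      ring
    · intro i j hij
      simp only [hY, Matrix.of_apply]
      rcases hij with h | h
      · exact Finset.sum_eq_zero (fun p _ => by rw [hzsupp p i h, zero_mul])
      · exact Finset.sum_eq_zero (fun p _ => by rw [hzsupp p j h, mul_zero])
    · exact CPOn_of_fintype z hznn (fun i _ j _ => by simp [hY])
    · intro i hi j hj
      simp only [hY, Matrix.of_apply]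
      calc ∑ p : Fin m1 × Fin m2, z p i * z p j
          = ∑ p : Fin m1 × Fin m2, ((b p.2 v / σ) * (b p.2 v / σ)) * (a p.1 i * a p.1 j) := by
            apply Finset.sum_congr rfl
            intro p _
            rw [show z p i = z (p.1, p.2) i from rfl, show z p j = z (p.1, p.2) j from rfl,
              hzA i hi p.1 p.2, hzA j hj p.1 p.2]
            ring
        _ = (∑ l, (b l v / σ) * (b l v / σ)) * (∑ k, a k i * a k j) := by
            rw [← key (fun l => (b l v / σ) * (b l v / σ)) (fun k => a k i * a k j)]
        _ = X1 i j := by rw [hcoefb, one_mul, ← hra i hi j hj]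
    · intro i hi j hj
      simp only [hY, Matrix.of_apply]
      have key2 : ∀ (c : Fin m1 → ℝ) (d : Fin m2 → ℝ),
          ∑ p : Fin m1 × Fin m2, c p.1 * d p.2 = (∑ k, c k) * (∑ l, d l) := by
        intro c d
        rw [Fintype.sum_prod_type]
        have : ∀ k : Fin m1, ∑ l, c k * d l = c k * (∑ l, d l) := by
          intro k
          rw [Finset.mul_sum]
        rw [Finset.sum_congr rfl (fun k _ => this k), ← Finset.sum_mul]
      calc ∑ p : Fin m1 × Fin m2, z p i * z p j
          = ∑ p : Fin m1 × Fin m2, ((a p.1 v / σ) * (a p.1 v / σ)) * (b p.2 i * b p.2 j) := by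
            apply Finset.sum_congr rfl
            intro p _
            rw [show z p i = z (p.1, p.2) i from rfl, show z p j = z (p.1, p.2) j from rfl,
              hzB i hi p.1 p.2, hzB j hj p.1 p.2]
            ring
        _ = (∑ k, (a k v / σ) * (a k v / σ)) * (∑ l, b l i * b l j) := by
            rw [← key2 (fun k => (a k v / σ) * (a k v / σ)) (fun l => b l i * b l j)]
        _ = X2 i j := by rw [hcoefa, one_mul, ← hrb i hi j hj]

end CPGlue

section DNNGlue
variable {V : Type} [Fintype V] [DecidableEq V]

/-- Finset version of IsDNNOn. -/
def DNNOn (X : Matrix V V ℝ) (A : Finset V) : Prop :=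
  (∀ i ∈ A, ∀ j ∈ A, 0 ≤ X i j) ∧
    ∀ x : V → ℝ, (∀ i, i ∉ A → x i = 0) → 0 ≤ x ⬝ᵥ X.mulVec x

lemma dot_mulVec_comm (X : Matrix V V ℝ) (hs : X.IsSymm) (f g : V → ℝ) :
    f ⬝ᵥ X.mulVec g = g ⬝ᵥ X.mulVec f := by
  have hsym : ∀ i j, X i j = X j i := fun i j => congrFun (congrFun hs.symm i) j
  simp only [dotProduct, Matrix.mulVec, Finset.mul_sum]
  rw [Finset.sum_comm]
  apply Finset.sum_congr rfl
  intro i _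
  apply Finset.sum_congr rfl
  intro j _
  rw [hsym i j]
  ring

lemma dot_single (X : Matrix V V ℝ) (x : V → ℝ) (v : V) :
    x ⬝ᵥ X.mulVec (fun i => if i = v then (1:ℝ) else 0) = ∑ i, x i * X i v := by
  simp only [dotProduct, Matrix.mulVec]
  apply Finset.sum_congr rfl
  intro i _
  congr 1
  simp [Finset.sum_ite_eq', mul_ite]

lemma quad_expand_s11 (X : Matrix V V ℝ) (f g : V → ℝ) (θ : ℝ) :
    (f + θ • g) ⬝ᵥ X.mulVec (f + θ • g)
      = f ⬝ᵥ X.mulVec f + θ * (f ⬝ᵥ X.mulVec g) + θ * (g ⬝ᵥ X.mulVec f)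
        + θ * (θ * (g ⬝ᵥ X.mulVec g)) := by
  rw [Matrix.mulVec_add, Matrix.mulVec_smul, dotProduct_add, add_dotProduct,
    add_dotProduct, dotProduct_smul, smul_dotProduct,
    smul_dotProduct, dotProduct_smul]
  simp only [smul_eq_mul]
  ring

lemma schur_nonneg (X : Matrix V V ℝ) (A : Finset V) (hsymm : X.IsSymm)
    (hsupp : ∀ i j : V, i ∉ A ∨ j ∉ A → X i j = 0)
    (hq : ∀ x : V → ℝ, (∀ i, i ∉ A → x i = 0) → 0 ≤ x ⬝ᵥ X.mulVec x)
    (v : V) (hv : v ∈ A) (c : ℝ) (hceq : X v v = c) (hc : 0 < c) (x : V → ℝ) :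
    0 ≤ x ⬝ᵥ X.mulVec x - (∑ i, x i * X i v) * ((∑ i, x i * X i v) / c) := by
  classical
  have h1 : x ⬝ᵥ X.mulVec x
      = (fun i => if i ∈ A then x i else 0) ⬝ᵥ X.mulVec (fun i => if i ∈ A then x i else 0) :=
    quad_restrict X A hsupp x
  have hsum : ∑ i, x i * X i v = ∑ i, (if i ∈ A then x i else 0) * X i v := by
    apply Finset.sum_congr rfl
    intro i _
    by_cases hi : i ∈ A
    · simp [hi]
    · rw [hsupp i v (Or.inl hi)]
      simp
  set xA : V → ℝ := fun i => if i ∈ A then x i else 0 with hxA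
  set ev : V → ℝ := fun i => if i = v then (1:ℝ) else 0 with hev
  have ht : xA ⬝ᵥ X.mulVec ev = ∑ i, xA i * X i v := dot_single X xA v
  have hvv : ev ⬝ᵥ X.mulVec ev = c := by
    rw [dot_single X ev v, hev]
    simp [Finset.sum_ite_eq', hceq]
  have hcomm : ev ⬝ᵥ X.mulVec xA = xA ⬝ᵥ X.mulVec ev := dot_mulVec_comm X hsymm ev xA
  have key : ∀ θ : ℝ, 0 ≤ c * (θ * θ) + (2 * (xA ⬝ᵥ X.mulVec ev)) * θ
      + (xA ⬝ᵥ X.mulVec xA) := by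
    intro θ
    have hsupp' : ∀ i, i ∉ A → (xA + θ • ev) i = 0 := by
      intro i hi
      have h1' : xA i = 0 := by simp [hxA, hi]
      have h2' : ev i = 0 := by
        simp only [hev]
        rw [if_neg]
        intro h
        exact hi (h ▸ hv)
      simp [h1', h2']
    have happ := hq (xA + θ • ev) hsupp'
    rw [quad_expand_s11 X xA ev θ, hcomm, hvv] at happ
    linarith
  have hd := discrim_le_zero key
  rw [discrim] at hd
  have h2 : (xA ⬝ᵥ X.mulVec ev) * (xA ⬝ᵥ X.mulVec ev) ≤ c * (xA ⬝ᵥ X.mulVec xA) := by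
    nlinarith
  have h3 : (xA ⬝ᵥ X.mulVec ev) * ((xA ⬝ᵥ X.mulVec ev) / c) ≤ xA ⬝ᵥ X.mulVec xA := by
    rw [mul_div_assoc', div_le_iff₀ hc]
    linarith [h2]
  rw [h1, hsum]
  have hsum2 : ∑ i, (if i ∈ A then x i else 0) * X i v = xA ⬝ᵥ X.mulVec ev := ht.symm
  rw [hsum2]
  linarith

lemma dnn_glue (X1 X2 : Matrix V V ℝ) (A B : Finset V)
    (h1 : DNNOn X1 A) (h2 : DNNOn X2 B) (h1symm : X1.IsSymm) (h2symm : X2.IsSymm)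
    (hs1 : ∀ i j : V, i ∉ A ∨ j ∉ A → X1 i j = 0)
    (hs2 : ∀ i j : V, i ∉ B ∨ j ∉ B → X2 i j = 0)
    (hcard : (A ∩ B).card ≤ 1) (hdiag : ∀ v ∈ A ∩ B, X1 v v = X2 v v) :
    ∃ Y : Matrix V V ℝ, Y.IsSymm ∧ (∀ i j : V, i ∉ A ∪ B ∨ j ∉ A ∪ B → Y i j = 0) ∧
      DNNOn Y (A ∪ B) ∧
      (∀ i ∈ A, ∀ j ∈ A, Y i j = X1 i j) ∧ (∀ i ∈ B, ∀ j ∈ B, Y i j = X2 i j) := by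
  classical
  have hX1s : ∀ i j, X1 i j = X1 j i := fun i j => congrFun (congrFun h1symm.symm i) j
  have hX2s : ∀ i j, X2 i j = X2 j i := fun i j => congrFun (congrFun h2symm.symm i) j
  have hABv : ∀ x ∈ A ∩ B, ∀ y ∈ A ∩ B, x = y := Finset.card_le_one.1 hcard
  by_cases hz : ∀ v ∈ A ∩ B, X1 v v = 0
  · -- direct sum
    have hX2A : ∀ i ∈ A, ∀ j ∈ A, X2 i j = 0 := by
      intro i hi j hj
      by_cases hiB : i ∈ B
      · by_cases hjB : j ∈ B
        · have hij : i = j := hABv i (Finset.mem_inter.2 ⟨hi, hiB⟩) j (Finset.mem_inter.2 ⟨hj, hjB⟩)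
          subst hij
          rw [← hdiag i (Finset.mem_inter.2 ⟨hi, hiB⟩)]
          exact hz i (Finset.mem_inter.2 ⟨hi, hiB⟩)
        · exact hs2 i j (Or.inr hjB)
      · exact hs2 i j (Or.inl hiB)
    have hX1B : ∀ i ∈ B, ∀ j ∈ B, X1 i j = 0 := by
      intro i hi j hj
      by_cases hiA : i ∈ A
      · by_cases hjA : j ∈ A
        · have hij : i = j := hABv i (Finset.mem_inter.2 ⟨hiA, hi⟩) j (Finset.mem_inter.2 ⟨hjA, hj⟩)
          subst hij
          exact hz i (Finset.mem_inter.2 ⟨hiA, hi⟩)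
        · exact hs1 i j (Or.inr hjA)
      · exact hs1 i j (Or.inl hiA)
    refine ⟨X1 + X2, ?_, ?_, ⟨?_, ?_⟩, ?_, ?_⟩
    · exact h1symm.add h2symm
    · intro i j hij
      rcases hij with h | h
      · have hiA : i ∉ A := fun hh => h (Finset.mem_union_left _ hh)
        have hiB : i ∉ B := fun hh => h (Finset.mem_union_right _ hh)
        simp [Matrix.add_apply, hs1 i j (Or.inl hiA), hs2 i j (Or.inl hiB)]
      · have hjA : j ∉ A := fun hh => h (Finset.mem_union_left _ hh)
        have hjB : j ∉ B := fun hh => h (Finset.mem_union_right _ hh)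
        simp [Matrix.add_apply, hs1 i j (Or.inr hjA), hs2 i j (Or.inr hjB)]
    · intro i _ j _
      simp only [Matrix.add_apply]
      have e1 : 0 ≤ X1 i j := by
        by_cases hiA : i ∈ A
        · by_cases hjA : j ∈ A
          · exact h1.1 i hiA j hjA
          · rw [hs1 i j (Or.inr hjA)]
        · rw [hs1 i j (Or.inl hiA)]
      have e2 : 0 ≤ X2 i j := by
        by_cases hiB : i ∈ B
        · by_cases hjB : j ∈ B
          · exact h2.1 i hiB j hjB
          · rw [hs2 i j (Or.inr hjB)]
        · rw [hs2 i j (Or.inl hiB)]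
      linarith
    · intro x hx
      rw [Matrix.add_mulVec, dotProduct_add]
      have e1 : 0 ≤ x ⬝ᵥ X1.mulVec x := by
        rw [quad_restrict X1 A hs1 x]
        apply h1.2
        intro i hi
        simp [hi]
      have e2 : 0 ≤ x ⬝ᵥ X2.mulVec x := by
        rw [quad_restrict X2 B hs2 x]
        apply h2.2
        intro i hi
        simp [hi]
      linarith
    · intro i hi j hj
      simp [Matrix.add_apply, hX2A i hi j hj]
    · intro i hi j hj
      simp [Matrix.add_apply, hX1B i hi j hj]
  · -- positive overlap vertex
    push_neg at hz
    obtain ⟨v, hvAB, hvne⟩ := hz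
    have hvA : v ∈ A := (Finset.mem_inter.1 hvAB).1
    have hvB : v ∈ B := (Finset.mem_inter.1 hvAB).2
    have hABv' : ∀ x ∈ A ∩ B, x = v := fun x hx => hABv x hx v hvAB
    set c : ℝ := X1 v v with hcdef
    have hc : 0 < c := lt_of_le_of_ne (h1.1 v hvA v hvA) (Ne.symm hvne)
    have hX2vv : X2 v v = c := (hdiag v hvAB).symm
    set u : V → ℝ := fun i => if i ∈ A then X1 i v else X2 i v with hu
    have huA : ∀ i ∈ A, u i = X1 i v := fun i hi => if_pos hi
    have huB : ∀ i ∈ B, u i = X2 i v := by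
      intro i hi
      by_cases hiA : i ∈ A
      · have hiv : i = v := hABv' i (Finset.mem_inter.2 ⟨hiA, hi⟩)
        subst hiv
        rw [hu]
        simp only [hiA, if_true]
        rw [hX2vv]
      · rw [hu]
        simp [hiA]
    have husupp : ∀ i, i ∉ A ∪ B → u i = 0 := by
      intro i hi
      have hiA : i ∉ A := fun hh => hi (Finset.mem_union_left _ hh)
      have hiB : i ∉ B := fun hh => hi (Finset.mem_union_right _ hh)
      rw [hu]
      simp [hiA, hs2 i v (Or.inl hiB)]
    set Q1 : Matrix V V ℝ := Matrix.of (fun i j => X1 i v * (X1 v j / c)) with hQ1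
    set Q2 : Matrix V V ℝ := Matrix.of (fun i j => X2 i v * (X2 v j / c)) with hQ2
    set M3 : Matrix V V ℝ := Matrix.of (fun i j => u i * (u j / c)) with hM3
    set Y : Matrix V V ℝ := X1 + X2 + M3 - Q1 - Q2 with hYdef
    have hYapp : ∀ i j, Y i j = X1 i j + X2 i j + u i * (u j / c)
        - X1 i v * (X1 v j / c) - X2 i v * (X2 v j / c) := by
      intro i j
      rw [hYdef]
      simp [Matrix.sub_apply, Matrix.add_apply, hM3, hQ1, hQ2]
    have hYA : ∀ i ∈ A, ∀ j ∈ A, Y i j = X1 i j := by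
      intro i hi j hj
      rw [hYapp, huA i hi, huA j hj]
      have hX2f : X2 i j = X2 i v * (X2 v j / c) := by
        by_cases hiB : i ∈ B
        · have hiv : i = v := hABv' i (Finset.mem_inter.2 ⟨hi, hiB⟩)
          rw [hiv]
          by_cases hjB : j ∈ B
          · have hjv : j = v := hABv' j (Finset.mem_inter.2 ⟨hj, hjB⟩)
            rw [hjv, hX2vv, div_self (ne_of_gt hc), mul_one]
          · rw [hs2 v j (Or.inr hjB)]
            simp
        · rw [hs2 i j (Or.inl hiB), hs2 i v (Or.inl hiB), zero_mul]
      rw [hX2f, show X1 v j = X1 j v from hX1s v j]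
      ring
    have hYB : ∀ i ∈ B, ∀ j ∈ B, Y i j = X2 i j := by
      intro i hi j hj
      rw [hYapp, huB i hi, huB j hj]
      have hX1f : X1 i j = X1 i v * (X1 v j / c) := by
        by_cases hiA : i ∈ A
        · have hiv : i = v := hABv' i (Finset.mem_inter.2 ⟨hiA, hi⟩)
          rw [hiv]
          by_cases hjA : j ∈ A
          · have hjv : j = v := hABv' j (Finset.mem_inter.2 ⟨hjA, hj⟩)
            rw [hjv, show X1 v v = c from rfl, div_self (ne_of_gt hc), mul_one]
          · rw [hs1 v j (Or.inr hjA)]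
            simp
        · rw [hs1 i j (Or.inl hiA), hs1 i v (Or.inl hiA), zero_mul]
      rw [hX1f, show X2 v j = X2 j v from hX2s v j]
      ring
    have hYsymm : Y.IsSymm := by
      unfold Matrix.IsSymm
      ext i j
      rw [Matrix.transpose_apply, hYapp, hYapp, hX1s j i, hX2s j i,
        hX1s j v, hX2s j v, hX1s v i, hX2s v i]
      ring
    have hYcross : ∀ i ∈ A, ∀ j ∈ B, i ∉ B → j ∉ A → Y i j = X1 i v * (X2 j v / c) := by
      intro i hi j hj hiB hjA
      rw [hYapp, huA i hi, huB j hj, hs1 i j (Or.inr hjA), hs2 i j (Or.inl hiB),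
        hs1 v j (Or.inr hjA), hs2 i v (Or.inl hiB)]
      ring
    have hYsymm' : ∀ i j, Y i j = Y j i := fun i j => congrFun (congrFun hYsymm.symm i) j
    refine ⟨Y, hYsymm, ?_, ⟨?_, ?_⟩, hYA, hYB⟩
    · intro i j hij
      have hzero : ∀ i' j', i' ∉ A ∪ B → Y i' j' = 0 := by
        intro i' j' hi'
        have hiA : i' ∉ A := fun hh => hi' (Finset.mem_union_left _ hh)
        have hiB : i' ∉ B := fun hh => hi' (Finset.mem_union_right _ hh)
        rw [hYapp, hs1 i' j' (Or.inl hiA), hs2 i' j' (Or.inl hiB), husupp i' hi',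
          hs1 i' v (Or.inl hiA), hs2 i' v (Or.inl hiB)]
        ring
      rcases hij with h | h
      · exact hzero i j h
      · rw [hYsymm' i j]
        exact hzero j i h
    · -- entrywise nonneg
      intro i hi j hj
      have main : ∀ i' ∈ A ∪ B, ∀ j' ∈ A ∪ B, i' ∈ A → 0 ≤ Y i' j' := by
        intro i' hi' j' hj' hiA
        by_cases hjA : j' ∈ A
        · rw [hYA i' hiA j' hjA]
          exact h1.1 i' hiA j' hjA
        · have hjB : j' ∈ B := by
            rcases Finset.mem_union.1 hj' with h | h
            · exact absurd h hjA
            · exact h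
          by_cases hiB : i' ∈ B
          · rw [hYB i' hiB j' hjB]
            exact h2.1 i' hiB j' hjB
          · rw [hYcross i' hiA j' hjB hiB hjA]
            exact mul_nonneg (h1.1 i' hiA v hvA)
              (div_nonneg (h2.1 j' hjB v hvB) (le_of_lt hc))
      by_cases hiA : i ∈ A
      · exact main i hi j hj hiA
      · have hiB : i ∈ B := by
          rcases Finset.mem_union.1 hi with h | h
          · exact absurd h hiA
          · exact h
        by_cases hjB : j ∈ B
        · rw [hYB i hiB j hjB]
          exact h2.1 i hiB j hjB
        · have hjA : j ∈ A := by
            rcases Finset.mem_union.1 hj with h | h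
            · exact h
            · exact absurd h hjB
          rw [hYsymm' i j]
          exact main j hj i hi hjA
    · -- quadratic form
      intro x hx
      have hexp : x ⬝ᵥ Y.mulVec x = x ⬝ᵥ X1.mulVec x + x ⬝ᵥ X2.mulVec x
          + x ⬝ᵥ M3.mulVec x - x ⬝ᵥ Q1.mulVec x - x ⬝ᵥ Q2.mulVec x := by
        rw [hYdef, Matrix.sub_mulVec, Matrix.sub_mulVec, Matrix.add_mulVec,
          Matrix.add_mulVec, dotProduct_sub, dotProduct_sub,
          dotProduct_add, dotProduct_add]
      have hQ1v : x ⬝ᵥ Q1.mulVec x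
          = (∑ i, x i * X1 i v) * ((∑ i, x i * X1 i v) / c) := by
        rw [hQ1, dot_rank1]
        congr 1
        have e : ∀ j : V, X1 v j / c * x j = x j * X1 j v / c := fun j => by
          rw [hX1s v j]
          ring
        rw [Finset.sum_congr rfl (fun j _ => e j), ← Finset.sum_div]
      have hQ2v : x ⬝ᵥ Q2.mulVec x
          = (∑ i, x i * X2 i v) * ((∑ i, x i * X2 i v) / c) := by
        rw [hQ2, dot_rank1]
        congr 1
        have e : ∀ j : V, X2 v j / c * x j = x j * X2 j v / c := fun j => by
          rw [hX2s v j]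
          ring
        rw [Finset.sum_congr rfl (fun j _ => e j), ← Finset.sum_div]
      have hM3v : 0 ≤ x ⬝ᵥ M3.mulVec x := by
        rw [hM3, dot_rank1]
        have e' : ∀ j : V, u j / c * x j = x j * u j / c := fun j => by ring
        have e : ∑ j, u j / c * x j = (∑ i, x i * u i) / c := by
          rw [Finset.sum_congr rfl (fun j _ => e' j), ← Finset.sum_div]
        rw [e, mul_div_assoc']
        exact div_nonneg (mul_self_nonneg _) (le_of_lt hc)
      have hS1 := schur_nonneg X1 A h1symm hs1 h1.2 v hvA c rfl hc x
      have hS2 := schur_nonneg X2 B h2symm hs2 h2.2 v hvB c hX2vv hc x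
      rw [hexp, hQ1v, hQ2v]
      linarith

end DNNGlue

section CPPRep
variable {n : ℕ}

lemma cpp_rep {X : Matrix (Fin n) (Fin n) ℝ} (hX : X ∈ CPP n) :
    ∃ (m : ℕ) (y : Fin m → Fin n → ℝ), (∀ k i, 0 ≤ y k i) ∧
      ∀ i j, X i j = ∑ k, y k i * y k j := by
  classical
  rw [CPP, convexHull_eq] at hX
  obtain ⟨ι', t, w, z, hw0, hw1, hz, hcm⟩ := hX
  have hXsum : X = ∑ a ∈ t, w a • z a := by
    rw [← hcm, Finset.centerMass, hw1, inv_one, one_smul]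
  let x : {a // a ∈ t} → Fin n → ℝ := fun a => Classical.choose (hz a a.2)
  have hx0 : ∀ a, ∀ i, 0 ≤ x a i := fun a => (Classical.choose_spec (hz a a.2)).1
  have hxz : ∀ a : {a // a ∈ t}, z a = vecMulVec (x a) (x a) :=
    fun a => (Classical.choose_spec (hz a a.2)).2
  let e := t.equivFin
  refine ⟨t.card, fun k i => Real.sqrt (w (e.symm k)) * x (e.symm k) i, ?_, ?_⟩
  · intro k i
    exact mul_nonneg (Real.sqrt_nonneg _) (hx0 _ _)
  · intro i j
    have step : ∀ a : {a // a ∈ t},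
        (Real.sqrt (w a) * x a i) * (Real.sqrt (w a) * x a j) = (w ↑a • z ↑a) i j := by
      intro a
      rw [hxz a]
      simp only [Matrix.smul_apply, smul_eq_mul, Matrix.vecMulVec_apply]
      rw [show Real.sqrt (w ↑a) * x a i * (Real.sqrt (w ↑a) * x a j)
        = (Real.sqrt (w ↑a) * Real.sqrt (w ↑a)) * (x a i * x a j) by ring,
        Real.mul_self_sqrt (hw0 _ a.2)]
    rw [Equiv.sum_comp e.symm (fun a => (Real.sqrt (w a) * x a i) * (Real.sqrt (w a) * x a j)),
      Finset.sum_congr rfl (fun a _ => step a)]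
    rw [Finset.univ_eq_attach, Finset.sum_attach t (fun a => (w a • z a) i j),
      ← Matrix.sum_apply i j t (fun a => w a • z a), ← hXsum]

lemma cpp_of_rep {X : Matrix (Fin n) (Fin n) ℝ} (m : ℕ) (y : Fin m → Fin n → ℝ)
    (hy : ∀ k i, 0 ≤ y k i) (hrep : ∀ i j, X i j = ∑ k, y k i * y k j) : X ∈ CPP n := by
  classical
  have hXeq : X = ∑ k, vecMulVec (y k) (y k) := by
    ext i j
    rw [hrep i j, Matrix.sum_apply]
    rfl
  rcases Nat.eq_zero_or_pos m with rfl | hm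
  · have : X = 0 := by
      rw [hXeq]
      simp
    rw [this]
    apply subset_convexHull
    exact ⟨0, fun i => le_refl 0, by ext i j; simp [Matrix.vecMulVec_apply]⟩
  · rw [CPP, convexHull_eq]
    refine ⟨Fin m, Finset.univ, fun _ => (m : ℝ)⁻¹,
      fun k => vecMulVec ((Real.sqrt m) • y k) ((Real.sqrt m) • y k), ?_, ?_, ?_, ?_⟩
    · intro k _
      positivity
    · rw [Finset.sum_const, Finset.card_univ, Fintype.card_fin, nsmul_eq_mul]
      field_simp
    · intro k _
      exact ⟨(Real.sqrt m) • y k,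
        fun i => mul_nonneg (Real.sqrt_nonneg _) (hy k i), rfl⟩
    · rw [Finset.centerMass, Finset.sum_const, Finset.card_univ, Fintype.card_fin,
        nsmul_eq_mul]
      have hmne : (m : ℝ) ≠ 0 := Nat.cast_ne_zero.2 hm.ne'
      rw [show (m : ℝ) * (m:ℝ)⁻¹ = 1 by field_simp, inv_one, one_smul]
      rw [hXeq]
      apply Finset.sum_congr rfl
      intro k _
      ext i j
      simp only [Matrix.smul_apply, Matrix.vecMulVec_apply, Pi.smul_apply, smul_eq_mul]
      rw [show Real.sqrt m * y k i * (Real.sqrt m * y k j)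
        = (Real.sqrt m * Real.sqrt m) * (y k i * y k j) by ring,
        Real.mul_self_sqrt (Nat.cast_nonneg m), ← mul_assoc,
        inv_mul_cancel₀ hmne, one_mul]

end CPPRep

lemma quad_eq_of_agree {V : Type} [Fintype V] [DecidableEq V]
    (Y Z : Matrix V V ℝ) (A : Finset V) (hagr : ∀ i ∈ A, ∀ j ∈ A, Y i j = Z i j)
    (x : V → ℝ) (hx : ∀ i, i ∉ A → x i = 0) :
    x ⬝ᵥ Y.mulVec x = x ⬝ᵥ Z.mulVec x := by
  simp only [dotProduct, Matrix.mulVec]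
  apply Finset.sum_congr rfl
  intro i _
  by_cases hi : i ∈ A
  · congr 1
    apply Finset.sum_congr rfl
    intro j _
    by_cases hj : j ∈ A
    · rw [hagr i hi j hj]
    · rw [hx j hj, mul_zero, mul_zero]
  · rw [hx i hi, zero_mul, zero_mul]

theorem stmt_11 {n ℓ : ℕ} {ι : Type} [DecidableEq ι] (Ieq Iineq : Finset ι)
    (Q0 : Matrix (Fin (n + 1)) (Fin (n + 1)) ℝ)
    (Q : ι → Matrix (Fin (n + 1)) (Fin (n + 1)) ℝ)
    (G : SimpleGraph (Fin (n + 1)))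
    (hchordal : IsChordal G)
    (C : Fin ℓ → Finset (Fin (n + 1)))
    (hmax : ∀ q, IsMaxClique G (C q : Set (Fin (n + 1))))
    (hall : ∀ s : Finset (Fin (n + 1)), IsMaxClique G (s : Set (Fin (n + 1))) → ∃ q, C q = s)
    -- block-clique: any two distinct maximal cliques intersect in at most one vertex
    (hbc : ∀ q r, q ≠ r → ((C q) ∩ (C r)).card ≤ 1)
    -- aggregated sparsity: the nonzero pattern of every data matrix is contained in Ē
    (hsp0 : ∀ i j, Q0 i j ≠ 0 → i = j ∨ G.Adj i j)
    (hsp : ∀ p ∈ Ieq ∪ Iineq, ∀ i j, Q p i j ≠ 0 → i = j ∨ G.Adj i j) :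
    -- the linear constraints, common to COP(K) and its decomposition
    let LC : Matrix (Fin (n + 1)) (Fin (n + 1)) ℝ → Prop := fun X =>
      X 0 0 = 1 ∧ (∀ p ∈ Ieq, trace (Q p * X) = 0) ∧ ∀ p ∈ Iineq, trace (Q p * X) ≤ 0
    let obj : Matrix (Fin (n + 1)) (Fin (n + 1)) ℝ → ℝ := fun X => trace (Q0 * X)
    (sInf (obj '' {X | X ∈ Gamma (n + 1) ∧ LC X}) =
       sInf (obj '' {X | X.IsSymm ∧ (∀ q, GammaOn X (C q : Set (Fin (n + 1)))) ∧ LC X})) ∧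
    (sInf (obj '' {X | X ∈ CPP (n + 1) ∧ LC X}) =
       sInf (obj '' {X | X.IsSymm ∧ (∀ q, IsCPOn X (C q : Set (Fin (n + 1)))) ∧ LC X})) ∧
    (sInf (obj '' {X | X ∈ DNN (n + 1) ∧ LC X}) =
       sInf (obj '' {X | X.IsSymm ∧ (∀ q, IsDNNOn X (C q : Set (Fin (n + 1)))) ∧ LC X})) := by
  intro LC obj
  classical
  have hpair : ∀ i j : Fin (n+1), (i = j ∨ G.Adj i j) → ∃ q, i ∈ C q ∧ j ∈ C q :=
    fun i j h => pair_in_clique hall i j h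
  have hsymmE : ∀ i j : Fin (n+1), (i = j ∨ G.Adj i j) → (j = i ∨ G.Adj j i) := by
    rintro i j (rfl | h)
    · exact Or.inl rfl
    · exact Or.inr h.symm
  have htr : ∀ (Q' : Matrix (Fin (n+1)) (Fin (n+1)) ℝ),
      (∀ i j, Q' i j ≠ 0 → i = j ∨ G.Adj i j) →
      ∀ Y X : Matrix (Fin (n+1)) (Fin (n+1)) ℝ,
      (∀ i j, (i = j ∨ G.Adj i j) → Y i j = X i j) →
      trace (Q' * Y) = trace (Q' * X) := by
    intro Q' hQ Y X hagr
    have e : ∀ (M : Matrix (Fin (n+1)) (Fin (n+1)) ℝ),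
        trace (Q' * M) = ∑ i, ∑ j, Q' i j * M j i := by
      intro M
      simp [Matrix.trace, Matrix.mul_apply, Matrix.diag]
    rw [e, e]
    apply Finset.sum_congr rfl
    intro i _
    apply Finset.sum_congr rfl
    intro j _
    by_cases h0 : Q' i j = 0
    · rw [h0, zero_mul, zero_mul]
    · rw [hagr j i (hsymmE i j (hQ i j h0))]
  have hLCtr : ∀ Y X : Matrix (Fin (n+1)) (Fin (n+1)) ℝ,
      (∀ i j, (i = j ∨ G.Adj i j) → Y i j = X i j) → LC X → LC Y ∧ obj Y = obj X := by
    intro Y X hagr hLC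
    obtain ⟨h00, heq, hineq⟩ := hLC
    refine ⟨⟨?_, ?_, ?_⟩, ?_⟩
    · rw [hagr 0 0 (Or.inl rfl)]
      exact h00
    · intro p hp
      rw [htr (Q p) (hsp p (Finset.mem_union_left _ hp)) Y X hagr]
      exact heq p hp
    · intro p hp
      rw [htr (Q p) (hsp p (Finset.mem_union_right _ hp)) Y X hagr]
      exact hineq p hp
    · exact htr Q0 hsp0 Y X hagr
  have hleaf := leaf_lemma hchordal hmax hall hbc
  have huniv : (Finset.univ : Finset (Fin ℓ)).Nonempty := by
    obtain ⟨q, _⟩ := hpair 0 0 (Or.inl rfl)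
    exact ⟨q, Finset.mem_univ q⟩
  have hcover : ∀ i : Fin (n+1), i ∈ Finset.univ.biUnion C := by
    intro i
    obtain ⟨q, hq, _⟩ := hpair i i (Or.inl rfl)
    exact Finset.mem_biUnion.2 ⟨q, Finset.mem_univ q, hq⟩
  refine ⟨?_, ?_, ?_⟩
  · -- Gamma
    apply congrArg sInf
    apply Set.ext
    intro r
    constructor
    · rintro ⟨X, ⟨⟨x, hx0, rfl⟩, hLC⟩, hobj⟩
      refine ⟨vecMulVec x x, ⟨?_, fun q => ⟨x, hx0, fun i _ j _ => rfl⟩, hLC⟩, hobj⟩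
      unfold Matrix.IsSymm
      ext i j
      rw [Matrix.transpose_apply, Matrix.vecMulVec_apply, Matrix.vecMulVec_apply, mul_comm]
    · rintro ⟨X, ⟨hsymm, hGOn, hLC⟩, hobj⟩
      set xx : Fin (n+1) → ℝ := fun i => Real.sqrt (X i i) with hxx
      have hagr : ∀ i j, (i = j ∨ G.Adj i j) → vecMulVec xx xx i j = X i j := by
        intro i j hij
        obtain ⟨q, hiq, hjq⟩ := hpair i j hij
        obtain ⟨y, hy0, hXy⟩ := hGOn q
        have hyk : ∀ k ∈ C q, xx k = y k := by
          intro k hk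
          have hkk : X k k = y k * y k := hXy k (Finset.mem_coe.2 hk) k (Finset.mem_coe.2 hk)
          rw [hxx]
          simp only []
          rw [hkk, Real.sqrt_mul_self (hy0 k)]
        rw [Matrix.vecMulVec_apply, hyk i hiq, hyk j hjq,
          ← hXy i (Finset.mem_coe.2 hiq) j (Finset.mem_coe.2 hjq)]
      obtain ⟨hLC', hobj'⟩ := hLCtr (vecMulVec xx xx) X hagr hLC
      exact ⟨vecMulVec xx xx, ⟨⟨xx, fun i => Real.sqrt_nonneg _, rfl⟩, hLC'⟩, by
        rw [hobj']
        exact hobj⟩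
  · -- CPP
    apply congrArg sInf
    apply Set.ext
    intro r
    constructor
    · rintro ⟨X, ⟨hXcpp, hLC⟩, hobj⟩
      obtain ⟨m, y, hy0, hrep⟩ := cpp_rep hXcpp
      refine ⟨X, ⟨?_, fun q => ⟨m, y, hy0, fun i _ j _ => hrep i j⟩, hLC⟩, hobj⟩
      unfold Matrix.IsSymm
      ext i j
      rw [Matrix.transpose_apply, hrep i j, hrep j i]
      apply Finset.sum_congr rfl
      intro k _
      ring
    · rintro ⟨X, ⟨hsymm, hCP, hLC⟩, hobj⟩
      have hXq : ∀ q, CPOn X (C q) := by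
        intro q
        obtain ⟨m, y, h0, hf⟩ := hCP q
        exact ⟨m, y, h0, fun i hi j hj => hf i (Finset.mem_coe.2 hi) j (Finset.mem_coe.2 hj)⟩
      have hloc : ∀ (Y Z : Matrix (Fin (n+1)) (Fin (n+1)) ℝ) (A : Finset (Fin (n+1))),
          CPOn Y A → (∀ i ∈ A, ∀ j ∈ A, Y i j = Z i j) → CPOn Z A := by
        rintro Y Z A ⟨m, y, h0, hf⟩ hagr
        exact ⟨m, y, h0, fun i hi j hj => by
          rw [← hagr i hi j hj]
          exact hf i hi j hj⟩
      obtain ⟨Y, hYsymm, hYsupp, hYP, hYagr⟩ :=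
        completion_induction CPOn C hleaf X hsymm hXq hloc
          (fun X1 X2 A B h1 h2 _ _ hs1 hs2 hcard hdiag =>
            cp_glue X1 X2 A B h1 h2 hs1 hs2 hcard hdiag)
          Finset.univ huniv
      obtain ⟨m, y, hy0, hrep⟩ := hYP
      have hrep' : ∀ i j, Y i j = ∑ k, y k i * y k j :=
        fun i j => hrep i (hcover i) j (hcover j)
      have hYcpp : Y ∈ CPP (n+1) := cpp_of_rep m y hy0 hrep'
      have hagr : ∀ i j, (i = j ∨ G.Adj i j) → Y i j = X i j := by
        intro i j hij
        obtain ⟨q, hiq, hjq⟩ := hpair i j hij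
        exact hYagr q (Finset.mem_univ q) i hiq j hjq
      obtain ⟨hLC', hobj'⟩ := hLCtr Y X hagr hLC
      exact ⟨Y, ⟨hYcpp, hLC'⟩, by
        rw [hobj']
        exact hobj⟩
  · -- DNN
    apply congrArg sInf
    apply Set.ext
    intro r
    constructor
    · rintro ⟨X, ⟨⟨hpsd, hnn⟩, hLC⟩, hobj⟩
      refine ⟨X, ⟨?_, fun q => ⟨fun i _ j _ => hnn i j, fun x _ => ?_⟩, hLC⟩, hobj⟩
      · have := hpsd.1
        rwa [Matrix.IsHermitian, Matrix.conjTranspose_eq_transpose_of_trivial] at this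
      · have := hpsd.dotProduct_mulVec_nonneg x
        rwa [star_trivial] at this
    · rintro ⟨X, ⟨hsymm, hDN, hLC⟩, hobj⟩
      have hXq : ∀ q, DNNOn X (C q) := by
        intro q
        obtain ⟨h0, hf⟩ := hDN q
        refine ⟨fun i hi j hj => h0 i (Finset.mem_coe.2 hi) j (Finset.mem_coe.2 hj), ?_⟩
        intro x hx
        exact hf x (fun i hi => hx i (fun hh => hi (Finset.mem_coe.1 hh)))
      have hloc : ∀ (Y Z : Matrix (Fin (n+1)) (Fin (n+1)) ℝ) (A : Finset (Fin (n+1))),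
          DNNOn Y A → (∀ i ∈ A, ∀ j ∈ A, Y i j = Z i j) → DNNOn Z A := by
        rintro Y Z A ⟨h0, hf⟩ hagr
        refine ⟨fun i hi j hj => by
          rw [← hagr i hi j hj]
          exact h0 i hi j hj, ?_⟩
        intro x hx
        rw [← quad_eq_of_agree Y Z A hagr x hx]
        exact hf x hx
      obtain ⟨Y, hYsymm, hYsupp, hYP, hYagr⟩ :=
        completion_induction DNNOn C hleaf X hsymm hXq hloc
          (fun X1 X2 A B h1 h2 h1s h2s hs1 hs2 hcard hdiag =>
            dnn_glue X1 X2 A B h1 h2 h1s h2s hs1 hs2 hcard hdiag)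
          Finset.univ huniv
      have hYdnn : Y ∈ DNN (n+1) := by
        refine ⟨Matrix.PosSemidef.of_dotProduct_mulVec_nonneg ?_ ?_, ?_⟩
        · rw [Matrix.IsHermitian, Matrix.conjTranspose_eq_transpose_of_trivial]
          exact hYsymm
        · intro x
          rw [star_trivial]
          exact hYP.2 x (fun i hi => absurd (hcover i) hi)
        · intro i j
          exact hYP.1 i (hcover i) j (hcover j)
      have hagr : ∀ i j, (i = j ∨ G.Adj i j) → Y i j = X i j := by
        intro i j hij
        obtain ⟨q, hiq, hjq⟩ := hpair i j hij
        exact hYagr q (Finset.mem_univ q) i hiq j hjq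
      obtain ⟨hLC', hobj'⟩ := hLCtr Y X hagr hLC
      exact ⟨Y, ⟨hYdnn, hLC'⟩, by
        rw [hobj']
        exact hobj⟩
end

section
/- Suppose the data matrices Q⁰ and Qᵖ (p ∈ I_eq ∪ I_ineq) are all diagonal. Then the problems inf{⟨Q⁰,X⟩ : X ∈ K, X_{kk} = 1, ⟨Qᵖ,X⟩ = 0 (p ∈ I_eq), ⟨Qᵖ,X⟩ ≤ 0 (p ∈ I_ineq)} have the same optimal value for K = Γⁿ, K = CPPⁿ, and K = DNNⁿ, and each is equivalent to the linear program inf{Σᵢ Q⁰ᵢᵢ Xᵢᵢ : Xᵢᵢ ≥ 0, X_{kk} = 1, Σᵢ Qᵖᵢᵢ Xᵢᵢ = 0 (p ∈ I_eq), Σᵢ Qᵖᵢᵢ Xᵢᵢ ≤ 0 (p ∈ I_ineq)} in the diagonal variables only. -/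
open Matrix

lemma trace_mul_of_isDiag {n : ℕ} {Q : Matrix (Fin n) (Fin n) ℝ} (hQ : Q.IsDiag)
    (X : Matrix (Fin n) (Fin n) ℝ) : trace (Q * X) = ∑ i, Q i i * X i i := by
  simp only [trace, diag, mul_apply]
  refine Finset.sum_congr rfl fun i _ => ?_
  rw [Finset.sum_eq_single i]
  · intro j _ hj
    rw [hQ (Ne.symm hj), zero_mul]
  · intro h; exact absurd (Finset.mem_univ i) h

lemma Gamma_nonneg {n : ℕ} {X : Matrix (Fin n) (Fin n) ℝ} (hX : X ∈ Gamma n) :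
    ∀ i j, 0 ≤ X i j := by
  obtain ⟨x, hx, rfl⟩ := hX
  intro i j
  exact mul_nonneg (hx i) (hx j)

lemma CPP_nonneg {n : ℕ} {X : Matrix (Fin n) (Fin n) ℝ} (hX : X ∈ CPP n) :
    ∀ i j, 0 ≤ X i j := by
  have hconv : Convex ℝ {X : Matrix (Fin n) (Fin n) ℝ | ∀ i j, 0 ≤ X i j} := by
    intro A hA B hB a b ha hb hab i j
    simp only [Matrix.add_apply, Matrix.smul_apply, smul_eq_mul]
    exact add_nonneg (mul_nonneg ha (hA i j)) (mul_nonneg hb (hB i j))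
  exact convexHull_min (fun Y hY => Gamma_nonneg hY) hconv hX

lemma diagonal_mem_CPP {n : ℕ} (hn : 0 < n) {u : Fin n → ℝ} (hu : ∀ i, 0 ≤ u i) :
    Matrix.diagonal u ∈ CPP n := by
  set e : Fin n → Fin n → ℝ := fun i j => if j = i then 1 else 0 with he
  set z : Fin n → Matrix (Fin n) (Fin n) ℝ :=
    fun i => ((n : ℝ) * u i) • vecMulVec (e i) (e i) with hz
  have hne : (n : ℝ) ≠ 0 := by positivity
  have hmem : ∀ i : Fin n, z i ∈ Gamma n := by
    intro i
    have hnn : (0:ℝ) ≤ (n : ℝ) * u i := mul_nonneg (by positivity) (hu i)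
    refine ⟨fun j => Real.sqrt ((n : ℝ) * u i) * e i j, ?_, ?_⟩
    · intro j
      refine mul_nonneg (Real.sqrt_nonneg _) ?_
      simp only [he]
      split <;> norm_num
    · ext a b
      simp only [hz, Matrix.smul_apply, vecMulVec_apply, smul_eq_mul]
      have : Real.sqrt ((n:ℝ) * u i) * e i a * (Real.sqrt ((n:ℝ) * u i) * e i b)
          = (Real.sqrt ((n:ℝ) * u i) * Real.sqrt ((n:ℝ) * u i)) * (e i a * e i b) := by ring
      rw [this, Real.mul_self_sqrt hnn, mul_assoc]
  have hdiag : Matrix.diagonal u = ∑ i, ((1:ℝ)/n) • z i := by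
    ext a b
    rw [Matrix.sum_apply]
    simp only [hz, he, Matrix.smul_apply, vecMulVec_apply, smul_eq_mul, mul_ite, mul_one,
      mul_zero, ite_mul, zero_mul]
    rw [Finset.sum_eq_single a]
    · by_cases h : a = b
      · subst h
        simp only [Matrix.diagonal_apply_eq, if_pos rfl]
        field_simp
        simp
      · rw [Matrix.diagonal_apply_ne _ h, if_pos rfl, if_neg (fun hh => h hh.symm)]
    · intro j _ hj
      rw [if_neg (Ne.symm hj)]
      simp
    · intro h; exact absurd (Finset.mem_univ a) h
  rw [hdiag]
  exact (convex_convexHull ℝ (Gamma n)).sum_mem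
    (fun i _ => by positivity)
    (by rw [Finset.sum_const, Finset.card_univ, Fintype.card_fin, nsmul_eq_mul]; field_simp)
    (fun i _ => subset_convexHull ℝ (Gamma n) (hmem i))

/-- Generic lemma: if a cone K has nonneg diagonals and realizes any nonneg diagonal,
then the feasible image equals the LP image. -/
lemma image_eq_lp {n : ℕ} {ι : Type} [DecidableEq ι] (Ieq Iineq : Finset ι)
    (Q0 : Matrix (Fin n) (Fin n) ℝ) (Q : ι → Matrix (Fin n) (Fin n) ℝ)
    (hQ0 : Q0.IsDiag) (hQ : ∀ p ∈ Ieq ∪ Iineq, (Q p).IsDiag)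
    (k : Fin n) (K : Set (Matrix (Fin n) (Fin n) ℝ))
    (hK1 : ∀ X ∈ K, ∀ i : Fin n, 0 ≤ X i i)
    (hK2 : ∀ u : Fin n → ℝ, (∀ i, 0 ≤ u i) → ∃ X ∈ K, ∀ i, X i i = u i) :
    ((fun X => trace (Q0 * X)) ''
      {X | X ∈ K ∧ X k k = 1 ∧ (∀ p ∈ Ieq, trace (Q p * X) = 0) ∧
        ∀ p ∈ Iineq, trace (Q p * X) ≤ 0}) =
    ((fun u => ∑ i, Q0 i i * u i) ''
      {u : Fin n → ℝ | (∀ i, 0 ≤ u i) ∧ u k = 1 ∧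
        (∀ p ∈ Ieq, ∑ i, Q p i i * u i = 0) ∧
        ∀ p ∈ Iineq, ∑ i, Q p i i * u i ≤ 0}) := by
  ext r
  constructor
  · rintro ⟨X, ⟨hXK, hXk, hXeq, hXle⟩, rfl⟩
    refine ⟨fun i => X i i, ⟨hK1 X hXK, hXk, ?_, ?_⟩, ?_⟩
    · intro p hp
      rw [← trace_mul_of_isDiag (hQ p (Finset.mem_union_left _ hp))]
      exact hXeq p hp
    · intro p hp
      rw [← trace_mul_of_isDiag (hQ p (Finset.mem_union_right _ hp))]
      exact hXle p hp
    · show ∑ i, Q0 i i * X i i = trace (Q0 * X)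
      exact (trace_mul_of_isDiag hQ0 X).symm
  · rintro ⟨u, ⟨hu0, huk, hueq, hule⟩, rfl⟩
    obtain ⟨X, hXK, hXd⟩ := hK2 u hu0
    refine ⟨X, ⟨hXK, by rw [hXd k, huk], ?_, ?_⟩, ?_⟩
    · intro p hp
      rw [trace_mul_of_isDiag (hQ p (Finset.mem_union_left _ hp))]
      simp only [hXd]
      exact hueq p hp
    · intro p hp
      rw [trace_mul_of_isDiag (hQ p (Finset.mem_union_right _ hp))]
      simp only [hXd]
      exact hule p hp
    · show trace (Q0 * X) = ∑ i, Q0 i i * u i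
      rw [trace_mul_of_isDiag hQ0]
      simp only [hXd]

theorem stmt_17 {n : ℕ} {ι : Type} [DecidableEq ι] (Ieq Iineq : Finset ι)
    (Q0 : Matrix (Fin n) (Fin n) ℝ) (Q : ι → Matrix (Fin n) (Fin n) ℝ)
    -- all data matrices are diagonal
    (hQ0 : Q0.IsDiag) (hQ : ∀ p ∈ Ieq ∪ Iineq, (Q p).IsDiag)
    (k : Fin n) :
    let Feas : Set (Matrix (Fin n) (Fin n) ℝ) → Set (Matrix (Fin n) (Fin n) ℝ) := fun K =>
      {X | X ∈ K ∧ X k k = 1 ∧ (∀ p ∈ Ieq, trace (Q p * X) = 0) ∧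
        ∀ p ∈ Iineq, trace (Q p * X) ≤ 0}
    let val : Set (Matrix (Fin n) (Fin n) ℝ) → ℝ := fun K =>
      sInf ((fun X => trace (Q0 * X)) '' Feas K)
    -- the linear program in the diagonal variables only
    let lpval : ℝ := sInf ((fun u => ∑ i, Q0 i i * u i) ''
      {u : Fin n → ℝ | (∀ i, 0 ≤ u i) ∧ u k = 1 ∧
        (∀ p ∈ Ieq, ∑ i, Q p i i * u i = 0) ∧
        ∀ p ∈ Iineq, ∑ i, Q p i i * u i ≤ 0})
    val (Gamma n) = val (CPP n) ∧ val (CPP n) = val (DNN n) ∧ val (DNN n) = lpval := by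
  intro Feas val lpval
  have hn : 0 < n := k.pos
  have hGamma : val (Gamma n) = lpval := by
    simp only [val, lpval, Feas]
    rw [image_eq_lp Ieq Iineq Q0 Q hQ0 hQ k (Gamma n)
      (fun X hX i => Gamma_nonneg hX i i)
      (fun u hu => ⟨vecMulVec (fun i => Real.sqrt (u i)) (fun i => Real.sqrt (u i)),
        ⟨_, fun i => Real.sqrt_nonneg _, rfl⟩,
        fun i => by simp [vecMulVec_apply, Real.mul_self_sqrt (hu i)]⟩)]
  have hCPP : val (CPP n) = lpval := by
    simp only [val, lpval, Feas]
    rw [image_eq_lp Ieq Iineq Q0 Q hQ0 hQ k (CPP n)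
      (fun X hX i => CPP_nonneg hX i i)
      (fun u hu => ⟨Matrix.diagonal u, diagonal_mem_CPP hn hu,
        fun i => Matrix.diagonal_apply_eq u i⟩)]
  have hDNN : val (DNN n) = lpval := by
    simp only [val, lpval, Feas]
    rw [image_eq_lp Ieq Iineq Q0 Q hQ0 hQ k (DNN n)
      (fun X hX i => hX.2 i i)
      (fun u hu => ⟨Matrix.diagonal u,
        ⟨Matrix.PosSemidef.diagonal (fun i => hu i),
         fun i j => by by_cases h : i = j
                       · subst h; simp [hu i]
                       · simp [Matrix.diagonal_apply_ne _ h]⟩,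
        fun i => Matrix.diagonal_apply_eq u i⟩)]
  exact ⟨hGamma.trans hCPP.symm, hCPP.trans hDNN.symm, hDNN⟩
end
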